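/- arXiv:0909.0851 — 4 statements merged into one kernel-verified Lean document; each statement's English description precedes it below -/
import Mathlib

section
/- Let d ∈ ℕ, d ≥ 1. A linear mapping 𝐀 : S_d → S_d satisfies exp(t𝐀)(S_d^+) = S_d^+ for all t ∈ ℝ^+ (i.e., for every t ≥ 0 the operator exponential exp(t𝐀) maps the positive semidefinite cone onto itself) if and only if there exists a matrix A ∈ M_d(ℝ) such that 𝐀X = AX + XAᵀ for all X ∈ S_d. -/
open Matrix

attribute [local instance] Matrix.frobeniusNormedAddCommGroup Matrix.frobeniusNormedSpace

/-- The linear subspace `S_d` of symmetric `d × d` real matrices. -/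
def symMatrices (d : ℕ) : Submodule ℝ (Matrix (Fin d) (Fin d) ℝ) where
  carrier := {X | X.IsSymm}
  add_mem' hX hY := hX.add hY
  zero_mem' := Matrix.isSymm_zero
  smul_mem' c _ hX := hX.smul c

/-- The operator exponential `exp(t𝒜)` of a linear operator `𝒜 : S_d → S_d`
(all linear operators on the finite-dimensional space `S_d` are continuous). -/
noncomputable def opExp {d : ℕ} (A : symMatrices d →ₗ[ℝ] symMatrices d) (t : ℝ) :
    symMatrices d →ₗ[ℝ] symMatrices d :=
  (@NormedSpace.exp _ _ _ (@NonUnitalSeminormedRing.toIsTopologicalRing _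
    ContinuousLinearMap.toSeminormedRing.toNonUnitalSeminormedRing)
    (t • LinearMap.toContinuousLinearMap A)).toLinearMap

/-- The positive semidefinite cone `S_d^+` inside `S_d`. -/
def psdCone (d : ℕ) : Set (symMatrices d) :=
  {Z : symMatrices d | (Z : Matrix (Fin d) (Fin d) ℝ).PosSemidef}

set_option synthInstance.maxHeartbeats 1000000
set_option maxHeartbeats 1000000
set_option linter.unusedSectionVars false

namespace PsdCore

variable {d : ℕ}

local notation "V" => Fin d → ℝ
local notation "M" => Matrix (Fin d) (Fin d) ℝ

lemma vmv_mulVec (a b u : V) : (vecMulVec a b) *ᵥ u = (b ⬝ᵥ u) • a := by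
  funext i
  simp [vecMulVec_apply, mulVec, dotProduct, Finset.mul_sum, mul_comm, mul_left_comm, mul_assoc]

lemma dot_symm_comm {D : M} (hD : Dᵀ = D) (u v : V) :
    u ⬝ᵥ (D *ᵥ v) = v ⬝ᵥ (D *ᵥ u) := by
  rw [dotProduct_mulVec, ← mulVec_transpose, hD, dotProduct_comm]

lemma mem_q (x : V) : vecMulVec x x ∈ symMatrices d := by
  show Matrix.IsSymm _
  ext i j
  simp [vecMulVec_apply, Matrix.transpose_apply, mul_comm]

lemma mem_s (x y : V) : vecMulVec x y + vecMulVec y x ∈ symMatrices d := by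
  show Matrix.IsSymm _
  ext i j
  simp [vecMulVec_apply, Matrix.transpose_apply, mul_comm, add_comm]

/-- `xxᵀ` as an element of `S_d`. -/
def Qv (x : V) : symMatrices d := ⟨vecMulVec x x, mem_q x⟩

/-- `xyᵀ + yxᵀ` as an element of `S_d`. -/
def Sv (x y : V) : symMatrices d := ⟨vecMulVec x y + vecMulVec y x, mem_s x y⟩

@[simp] lemma Sv_coe (x y : V) :
    ((Sv x y : symMatrices d) : M) = vecMulVec x y + vecMulVec y x := rfl

@[simp] lemma Qv_coe (x : V) : ((Qv x : symMatrices d) : M) = vecMulVec x x := rfl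

variable (𝒜 : symMatrices d →ₗ[ℝ] symMatrices d)

def Phi (x : V) : M := (𝒜 (Qv x) : M)

def Bb (x y : V) : M := (𝒜 (Sv x y) : M)

lemma Phi_symm (x : V) : (Phi 𝒜 x)ᵀ = Phi 𝒜 x := (𝒜 (Qv x)).2

lemma Bb_symm (x y : V) : (Bb 𝒜 x y)ᵀ = Bb 𝒜 x y := (𝒜 (Sv x y)).2

lemma Sv_eq (x y : V) : Sv x y = Qv (x + y) - Qv x - Qv y := by
  apply Subtype.ext
  show vecMulVec x y + vecMulVec y x = _
  push_cast [Qv]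
  ext i j
  simp [vecMulVec_apply]
  ring

lemma Bb_eq (x y : V) : Bb 𝒜 x y = Phi 𝒜 (x + y) - Phi 𝒜 x - Phi 𝒜 y := by
  unfold Bb Phi
  rw [Sv_eq, map_sub, map_sub]
  push_cast
  abel

lemma Sv_comm (x y : V) : Sv x y = Sv y x := by
  apply Subtype.ext
  show vecMulVec x y + vecMulVec y x = vecMulVec y x + vecMulVec x y
  exact add_comm _ _

lemma Bb_comm (x y : V) : Bb 𝒜 x y = Bb 𝒜 y x := by unfold Bb; rw [Sv_comm]

lemma Sv_smul_left (c : ℝ) (x y : V) : Sv (c • x) y = c • Sv x y := by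
  apply Subtype.ext
  show vecMulVec (c • x) y + vecMulVec y (c • x) = c • (vecMulVec x y + vecMulVec y x)
  ext i j
  simp [vecMulVec_apply]
  ring

lemma Bb_smul_left (c : ℝ) (x y : V) : Bb 𝒜 (c • x) y = c • Bb 𝒜 x y := by
  unfold Bb
  rw [Sv_smul_left, _root_.map_smul]
  push_cast
  rfl

lemma Qv_smul (c : ℝ) (x : V) : Qv (c • x) = (c ^ 2) • Qv x := by
  apply Subtype.ext
  show vecMulVec (c • x) (c • x) = (c ^ 2) • vecMulVec x x
  ext i j
  simp [vecMulVec_apply]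
  ring

lemma Phi_smul (c : ℝ) (x : V) : Phi 𝒜 (c • x) = (c ^ 2) • Phi 𝒜 x := by
  unfold Phi
  rw [Qv_smul, _root_.map_smul]
  push_cast
  rfl

lemma Sv_self (x : V) : Sv x x = (2 : ℝ) • Qv x := by
  apply Subtype.ext
  show vecMulVec x x + vecMulVec x x = (2:ℝ) • vecMulVec x x
  ext i j
  simp [vecMulVec_apply]
  ring

lemma Bb_self (x : V) : Bb 𝒜 x x = (2 : ℝ) • Phi 𝒜 x := by
  unfold Bb Phi
  rw [Sv_self, _root_.map_smul]
  push_cast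
  rfl

/-- The candidate "half-derivative" vector `w(x)`. -/
noncomputable def wv (x : V) : V :=
  (x ⬝ᵥ x)⁻¹ • (Phi 𝒜 x *ᵥ x) - ((x ⬝ᵥ (Phi 𝒜 x *ᵥ x)) / (2 * (x ⬝ᵥ x) ^ 2)) • x

end PsdCore

section part2

variable {d : ℕ}
local notation "V" => Fin d → ℝ
local notation "M" => Matrix (Fin d) (Fin d) ℝ

namespace PsdCore

variable (𝒜 : symMatrices d →ₗ[ℝ] symMatrices d)

/-- polarized positivity property, second stage -/
lemma hP2 (hP : ∀ x y : V, x ⬝ᵥ y = 0 → y ⬝ᵥ (Phi 𝒜 x *ᵥ y) = 0)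
    {x x' y : V} (h1 : x ⬝ᵥ y = 0) (h2 : x' ⬝ᵥ y = 0) :
    y ⬝ᵥ (Bb 𝒜 x x' *ᵥ y) = 0 := by
  have h3 : (x + x') ⬝ᵥ y = 0 := by rw [add_dotProduct, h1, h2, add_zero]
  have e1 := hP x y h1
  have e2 := hP x' y h2
  have e3 := hP (x + x') y h3
  rw [Bb_eq]
  simp only [sub_mulVec, dotProduct_sub]
  rw [e1, e2, e3]
  ring

/-- polarized positivity property, third stage -/
lemma hP3 (hP : ∀ x y : V, x ⬝ᵥ y = 0 → y ⬝ᵥ (Phi 𝒜 x *ᵥ y) = 0)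
    {x x' y y' : V} (h1 : x ⬝ᵥ y = 0) (h2 : x' ⬝ᵥ y = 0)
    (h3 : x ⬝ᵥ y' = 0) (h4 : x' ⬝ᵥ y' = 0) :
    y ⬝ᵥ (Bb 𝒜 x x' *ᵥ y') = 0 := by
  have h5 : x ⬝ᵥ (y + y') = 0 := by rw [dotProduct_add, h1, h3, add_zero]
  have h6 : x' ⬝ᵥ (y + y') = 0 := by rw [dotProduct_add, h2, h4, add_zero]
  have e1 := hP2 𝒜 hP h1 h2
  have e2 := hP2 𝒜 hP h3 h4
  have e3 := hP2 𝒜 hP h5 h6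
  have hsym : y' ⬝ᵥ (Bb 𝒜 x x' *ᵥ y) = y ⬝ᵥ (Bb 𝒜 x x' *ᵥ y') :=
    dot_symm_comm (Bb_symm 𝒜 x x') y' y
  simp only [mulVec_add, dotProduct_add, add_dotProduct] at e3
  rw [e1, e2] at e3
  -- e3 : 0 + y ⬝ᵥ Bb *ᵥ y' + (y' ⬝ᵥ Bb *ᵥ y + 0) = 0
  rw [hsym] at e3
  linarith

/-- Lemma 1 : the rank-two decomposition of `Phi x`. -/
lemma Phi_decomp (hP : ∀ x y : V, x ⬝ᵥ y = 0 → y ⬝ᵥ (Phi 𝒜 x *ᵥ y) = 0)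
    {x : V} (hx : x ⬝ᵥ x ≠ 0) :
    Phi 𝒜 x = vecMulVec x (wv 𝒜 x) + vecMulVec (wv 𝒜 x) x := by
  set n := x ⬝ᵥ x with hn
  set m := Phi 𝒜 x *ᵥ x with hm
  set s := x ⬝ᵥ m with hs
  set w := wv 𝒜 x with hw
  have hwdef : w = n⁻¹ • m - (s / (2 * n ^ 2)) • x := rfl
  set D := Phi 𝒜 x - (vecMulVec x w + vecMulVec w x) with hD
  have hDsymm : Dᵀ = D := by
    rw [hD]
    simp only [transpose_sub, transpose_add, Phi_symm]
    congr 1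
    ext i j
    simp [vecMulVec_apply, Matrix.transpose_apply]
    ring
  have hwx : w ⬝ᵥ x = s / (2 * n) := by
    rw [hwdef]
    rw [sub_dotProduct, smul_dotProduct, smul_dotProduct]
    rw [show m ⬝ᵥ x = s from dotProduct_comm m x]
    rw [show x ⬝ᵥ x = n from rfl]
    field_simp
    rw [smul_eq_mul, smul_eq_mul]
    field_simp
    ring
  have hDx : D *ᵥ x = 0 := by
    rw [hD, sub_mulVec, add_mulVec, vmv_mulVec, vmv_mulVec]
    rw [hwx, show x ⬝ᵥ x = n from rfl, ← hm]
    rw [hwdef]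
    rw [smul_sub, smul_smul, smul_smul]
    rw [mul_inv_cancel₀ hx]
    have : n * (s / (2 * n ^ 2)) = s / (2 * n) := by field_simp
    rw [this, one_smul]
    abel
  have key : ∀ u v : V, v ⬝ᵥ (D *ᵥ u) = 0 := by
    intro u v
    set p := u - ((x ⬝ᵥ u) / n) • x with hp
    set q := v - ((x ⬝ᵥ v) / n) • x with hq
    have hpx : x ⬝ᵥ p = 0 := by
      rw [hp, dotProduct_sub, dotProduct_smul]
      rw [show x ⬝ᵥ x = n from rfl]
      field_simp
      rw [smul_eq_mul, div_mul_cancel₀ _ hx, sub_self]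
    have hqx : x ⬝ᵥ q = 0 := by
      rw [hq, dotProduct_sub, dotProduct_smul]
      rw [show x ⬝ᵥ x = n from rfl]
      field_simp
      rw [smul_eq_mul, div_mul_cancel₀ _ hx, sub_self]
    have hu : u = p + ((x ⬝ᵥ u) / n) • x := by rw [hp]; abel
    have hv : v = q + ((x ⬝ᵥ v) / n) • x := by rw [hq]; abel
    have hDp : x ⬝ᵥ (D *ᵥ p) = 0 := by
      rw [dot_symm_comm hDsymm x p, hDx, dotProduct_zero]
    have hqDp : q ⬝ᵥ (D *ᵥ p) = 0 := by
      have hBb : q ⬝ᵥ (Bb 𝒜 x x *ᵥ p) = 0 := hP3 𝒜 hP hqx hqx hpx hpx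
      rw [Bb_self] at hBb
      have h2 : q ⬝ᵥ (Phi 𝒜 x *ᵥ p) = 0 := by
        rw [smul_mulVec, dotProduct_smul] at hBb
        simpa using hBb
      rw [hD, sub_mulVec, add_mulVec, vmv_mulVec, vmv_mulVec]
      rw [dotProduct_sub, dotProduct_add, h2, dotProduct_smul, dotProduct_smul]
      rw [show q ⬝ᵥ x = 0 from by rw [dotProduct_comm]; exact hqx]
      have hqw : q ⬝ᵥ w = w ⬝ᵥ q := dotProduct_comm q w
      rw [show x ⬝ᵥ p = 0 from hpx]
      simp
    calc v ⬝ᵥ (D *ᵥ u)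
        = (q + ((x ⬝ᵥ v) / n) • x) ⬝ᵥ (D *ᵥ (p + ((x ⬝ᵥ u) / n) • x)) := by rw [← hu, ← hv]
      _ = 0 := by
          rw [mulVec_add, mulVec_smul, hDx, smul_zero, add_zero]
          rw [add_dotProduct, smul_dotProduct, hqDp, hDp]
          simp
  have hD0 : D = 0 := by
    ext i j
    have := key (Pi.single j 1) (Pi.single i 1)
    rw [mulVec_single] at this
    rw [single_dotProduct] at this
    simpa using this
  exact sub_eq_zero.mp hD0
end PsdCore
end part2

section part3
variable {d : ℕ}
local notation "V" => Fin d → ℝ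
local notation "M" => Matrix (Fin d) (Fin d) ℝ

namespace PsdCore
variable (𝒜 : symMatrices d →ₗ[ℝ] symMatrices d)

lemma wv_smul (c : ℝ) (hc : c ≠ 0) {x : V} (hx : x ⬝ᵥ x ≠ 0) :
    wv 𝒜 (c • x) = c • wv 𝒜 x := by
  unfold wv
  rw [Phi_smul]
  have h1 : (c • x) ⬝ᵥ (c • x) = (c ^ 2) * (x ⬝ᵥ x) := by
    simp only [dotProduct_smul, smul_dotProduct, smul_eq_mul]; try ring
  have h2 : (c ^ 2 • Phi 𝒜 x) *ᵥ (c • x) = (c ^ 3) • (Phi 𝒜 x *ᵥ x) := by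
    rw [smul_mulVec, mulVec_smul, smul_smul]
    congr 1
    try ring
  rw [h1, h2]
  have h3 : (c • x) ⬝ᵥ ((c ^ 3) • (Phi 𝒜 x *ᵥ x)) = (c ^ 4) * (x ⬝ᵥ (Phi 𝒜 x *ᵥ x)) := by
    simp only [dotProduct_smul, smul_dotProduct, smul_eq_mul]; try ring
  rw [h3]
  funext k
  simp only [Pi.sub_apply, Pi.smul_apply, smul_eq_mul]
  field_simp

/-- Lemma E: for a pair of vectors with a dual pair, `Bb x x'` has the expected
form up to a multiple of `x'x'ᵀ - xxᵀ`. -/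
lemma Bb_almost (hP : ∀ x y : V, x ⬝ᵥ y = 0 → y ⬝ᵥ (Phi 𝒜 x *ᵥ y) = 0)
    {x x' z z' : V} (hz1 : x ⬝ᵥ z = 1) (hz2 : x' ⬝ᵥ z = 0)
    (hz3 : x ⬝ᵥ z' = 0) (hz4 : x' ⬝ᵥ z' = 1) :
    ∃ l : ℝ, Bb 𝒜 x x' =
      vecMulVec x (wv 𝒜 x') + vecMulVec (wv 𝒜 x') x
      + vecMulVec x' (wv 𝒜 x) + vecMulVec (wv 𝒜 x) x'
      + l • (vecMulVec x' x' - vecMulVec x x) := by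
  have hx : x ⬝ᵥ x ≠ 0 := by
    intro h
    rw [dotProduct_self_eq_zero] at h
    rw [h, zero_dotProduct] at hz1; simp at hz1
  have hx' : x' ⬝ᵥ x' ≠ 0 := by
    intro h
    rw [dotProduct_self_eq_zero] at h
    rw [h, zero_dotProduct] at hz4; simp at hz4
  have hxp : (x + x') ⬝ᵥ (x + x') ≠ 0 := by
    intro h
    rw [dotProduct_self_eq_zero] at h
    have h5 : (x + x') ⬝ᵥ z = 1 := by rw [add_dotProduct, hz1, hz2, add_zero]
    rw [h, zero_dotProduct] at h5; simp at h5
  have hxm : (x - x') ⬝ᵥ (x - x') ≠ 0 := by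
    intro h
    rw [dotProduct_self_eq_zero] at h
    have h5 : (x - x') ⬝ᵥ z = 1 := by rw [sub_dotProduct, hz1, hz2, sub_zero]
    rw [h, zero_dotProduct] at h5; simp at h5
  set w := wv 𝒜 x
  set w' := wv 𝒜 x'
  set wb := wv 𝒜 (x + x')
  set wt := wv 𝒜 (x - x')
  have dx := Phi_decomp 𝒜 hP hx
  have dx' := Phi_decomp 𝒜 hP hx'
  have dp := Phi_decomp 𝒜 hP hxp
  have dm := Phi_decomp 𝒜 hP hxm
  have eq1 : Phi 𝒜 (x + x') = Phi 𝒜 x + Bb 𝒜 x x' + Phi 𝒜 x' := by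
    rw [Bb_eq]; abel
  have eq2 : Phi 𝒜 (x - x') = Phi 𝒜 x - Bb 𝒜 x x' + Phi 𝒜 x' := by
    have h1 : x + (-1 : ℝ) • x' = x - x' := by funext k; simp [sub_eq_add_neg]
    have h2 : Bb 𝒜 x ((-1 : ℝ) • x') = -(Bb 𝒜 x x') := by
      rw [Bb_comm, Bb_smul_left, Bb_comm]; simp
    have h3 : Phi 𝒜 ((-1 : ℝ) • x') = Phi 𝒜 x' := by
      rw [Phi_smul]; norm_num
    have h4 := Bb_eq 𝒜 x ((-1 : ℝ) • x')
    rw [h2, h3, h1] at h4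
    -- h4 : -(Bb x x') = Phi (x - x') - Phi x - Phi x'
    ext i j
    have h5 := congrFun (congrFun h4 i) j
    simp only [Matrix.add_apply, Matrix.sub_apply, Matrix.neg_apply] at h5 ⊢
    linarith
  -- the sum identity
  set a := wb + wt - (2 : ℝ) • w with ha
  set b := wb - wt - (2 : ℝ) • w' with hb
  have hsum : vecMulVec x a + vecMulVec a x + vecMulVec x' b + vecMulVec b x' = 0 := by
    have key : (vecMulVec (x + x') wb + vecMulVec wb (x + x'))
        + (vecMulVec (x - x') wt + vecMulVec wt (x - x'))
        = (Phi 𝒜 x + Bb 𝒜 x x' + Phi 𝒜 x') + (Phi 𝒜 x - Bb 𝒜 x x' + Phi 𝒜 x') := by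
      rw [← dp, ← dm, eq1, eq2]
    rw [dx, dx'] at key
    ext i j
    have hk := congrFun (congrFun key i) j
    simp only [Matrix.add_apply, Matrix.sub_apply, vecMulVec_apply, Pi.add_apply,
      Pi.sub_apply, Pi.smul_apply, smul_eq_mul, Matrix.zero_apply, ha, hb] at hk ⊢
    ring_nf at hk ⊢
    linarith [hk]
  -- extract a, b
  have happ := congrArg (fun MM : M => MM *ᵥ z) hsum
  simp only [add_mulVec, vmv_mulVec, zero_mulVec] at happ
  have haz : a ⬝ᵥ z = 0 := by
    have h' := congrArg (fun vv : V => vv ⬝ᵥ z) happ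
    simp only [add_dotProduct, smul_dotProduct, zero_dotProduct, smul_eq_mul] at h'
    rw [hz1, hz2] at h'
    have hc1 : z ⬝ᵥ a = a ⬝ᵥ z := dotProduct_comm z a
    linarith
  have haeq : a = -(b ⬝ᵥ z) • x' := by
    funext k
    have h := congrFun happ k
    simp only [Pi.add_apply, Pi.smul_apply, smul_eq_mul, Pi.zero_apply, Pi.neg_apply,
      neg_mul] at h ⊢
    rw [hz1, hz2, haz] at h
    linarith
  have happ' := congrArg (fun MM : M => MM *ᵥ z') hsum
  simp only [add_mulVec, vmv_mulVec, zero_mulVec] at happ'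
  have hbz : b ⬝ᵥ z' = 0 := by
    have h' := congrArg (fun vv : V => vv ⬝ᵥ z') happ'
    simp only [add_dotProduct, smul_dotProduct, zero_dotProduct, smul_eq_mul] at h'
    rw [hz3, hz4] at h'
    have hc1 : a ⬝ᵥ z' = -(b ⬝ᵥ z) := by
      rw [haeq, smul_dotProduct, hz4]; simp
    linarith
  have haz' : a ⬝ᵥ z' = -(b ⬝ᵥ z) := by
    rw [haeq, smul_dotProduct, hz4]; simp
  have hbeq : b = (b ⬝ᵥ z) • x := by
    funext k
    have h := congrFun happ' k
    simp only [Pi.add_apply, Pi.smul_apply, smul_eq_mul, Pi.zero_apply] at h ⊢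
    rw [hz3, hz4, haz', hbz] at h
    linarith
  set l := -(b ⬝ᵥ z) with hl
  have hA : a = l • x' := haeq
  have hB : b = -l • x := by rw [hbeq]; congr 1; rw [hl]; ring
  refine ⟨l, ?_⟩
  -- wb = w + w' + (l/2) • (x' - x)
  have hwb : wb = w + w' + (l / 2) • (x' - x) := by
    have h1 : a + b = (2 : ℝ) • wb - (2 : ℝ) • w - (2 : ℝ) • w' := by
      rw [ha, hb]; funext k; simp only [Pi.add_apply, Pi.sub_apply, Pi.smul_apply, smul_eq_mul]; ring
    rw [hA, hB] at h1
    funext k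
    have h := congrFun h1 k
    simp only [Pi.add_apply, Pi.sub_apply, Pi.smul_apply, Pi.neg_apply, smul_eq_mul,
      neg_mul] at h ⊢
    ring_nf at h ⊢
    linarith
  -- conclude
  have hBb : Bb 𝒜 x x' = (vecMulVec (x + x') wb + vecMulVec wb (x + x'))
      - (vecMulVec x w + vecMulVec w x) - (vecMulVec x' w' + vecMulVec w' x') := by
    rw [← dp, ← dx, ← dx', eq1]; abel
  rw [hBb, hwb]
  ext i j
  simp only [Matrix.add_apply, Matrix.sub_apply, Matrix.smul_apply, vecMulVec_apply,
    Pi.add_apply, Pi.sub_apply, Pi.smul_apply, smul_eq_mul]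
  ring

end PsdCore
end part3

section part4
variable {d : ℕ}
local notation "V" => Fin d → ℝ
local notation "M" => Matrix (Fin d) (Fin d) ℝ

namespace PsdCore
variable (𝒜 : symMatrices d →ₗ[ℝ] symMatrices d)

lemma Bb_formula (hP : ∀ x y : V, x ⬝ᵥ y = 0 → y ⬝ᵥ (Phi 𝒜 x *ᵥ y) = 0)
    {x x' z z' : V} (hz1 : x ⬝ᵥ z = 1) (hz2 : x' ⬝ᵥ z = 0)
    (hz3 : x ⬝ᵥ z' = 0) (hz4 : x' ⬝ᵥ z' = 1) :
    Bb 𝒜 x x' =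
      vecMulVec x (wv 𝒜 x') + vecMulVec (wv 𝒜 x') x
      + vecMulVec x' (wv 𝒜 x) + vecMulVec (wv 𝒜 x) x' := by
  have hx : x ⬝ᵥ x ≠ 0 := by
    intro h
    rw [dotProduct_self_eq_zero] at h
    rw [h, zero_dotProduct] at hz1; simp at hz1
  obtain ⟨l1, h1⟩ := Bb_almost 𝒜 hP hz1 hz2 hz3 hz4
  have hz1' : ((2:ℝ) • x) ⬝ᵥ ((2:ℝ)⁻¹ • z) = 1 := by
    rw [smul_dotProduct, dotProduct_smul, hz1]; norm_num
  have hz2' : x' ⬝ᵥ ((2:ℝ)⁻¹ • z) = 0 := by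
    rw [dotProduct_smul, hz2]; norm_num
  have hz3' : ((2:ℝ) • x) ⬝ᵥ z' = 0 := by
    rw [smul_dotProduct, hz3]; norm_num
  obtain ⟨l2, h2⟩ := Bb_almost 𝒜 hP hz1' hz2' hz3' hz4
  rw [Bb_smul_left, wv_smul 𝒜 2 two_ne_zero hx] at h2
  -- subtract 2 • h1 from h2
  have h3 : l2 • (vecMulVec x' x' - vecMulVec ((2:ℝ) • x) ((2:ℝ) • x))
      = (2 : ℝ) • (l1 • (vecMulVec x' x' - vecMulVec x x)) := by
    ext i j
    have e1 := congrFun (congrFun h1 i) j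
    have e2 := congrFun (congrFun h2 i) j
    simp only [Matrix.add_apply, Matrix.sub_apply, Matrix.smul_apply, vecMulVec_apply,
      Pi.smul_apply, smul_eq_mul] at e1 e2 ⊢
    linear_combination 2 * e1 - e2
  have t1 := congrArg (fun MM : M => z ⬝ᵥ (MM *ᵥ z)) h3
  have t2 := congrArg (fun MM : M => z' ⬝ᵥ (MM *ᵥ z')) h3
  simp only [smul_mulVec, sub_mulVec, vmv_mulVec, mulVec_smul, dotProduct_smul,
    dotProduct_sub, smul_eq_mul, smul_dotProduct] at t1 t2
  rw [dotProduct_comm z x', dotProduct_comm z x, hz1, hz2] at t1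
  rw [dotProduct_comm z' x', dotProduct_comm z' x, hz3, hz4] at t2
  have hl1 : l1 = 0 := by
    ring_nf at t1 t2
    linarith
  rw [hl1] at h1
  rw [h1]
  ext i j
  simp only [Matrix.add_apply, Matrix.smul_apply, Matrix.sub_apply, vecMulVec_apply,
    smul_eq_mul]
  ring

/-- The main algebraic result: a linear map on `S_d` with the vanishing property
has Lyapunov form. -/
theorem exists_lyapunov (hP : ∀ x y : V, x ⬝ᵥ y = 0 → y ⬝ᵥ (Phi 𝒜 x *ᵥ y) = 0) :
    ∃ A : M, ∀ X : symMatrices d,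
      ((𝒜 X : M)) = A * (X : M) + (X : M) * Aᵀ := by
  classical
  set e : Fin d → V := fun i => Pi.single i 1 with he
  set w : Fin d → V := fun i => wv 𝒜 (e i) with hwdef
  have hd : ∀ i j : Fin d, e i ⬝ᵥ e j = if i = j then 1 else 0 := by
    intro i j
    rw [he]
    simp only [single_dotProduct, one_mul, Pi.single_apply]
  refine ⟨Matrix.of (fun k i => w i k), ?_⟩
  have hpair : ∀ i j : Fin d, Bb 𝒜 (e i) (e j)
      = vecMulVec (e i) (w j) + vecMulVec (w j) (e i)
        + vecMulVec (e j) (w i) + vecMulVec (w i) (e j) := by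
    intro i j
    by_cases hij : i = j
    · subst hij
      have hei : e i ⬝ᵥ e i ≠ 0 := by rw [hd i i]; simp
      have := Phi_decomp 𝒜 hP hei
      rw [Bb_self, this]
      ext k l
      simp only [Matrix.add_apply, Matrix.smul_apply, vecMulVec_apply, smul_eq_mul, hwdef]
      ring
    · have h1 : e i ⬝ᵥ e i = 1 := by rw [hd]; simp
      have h2 : e j ⬝ᵥ e i = 0 := by rw [hd]; simp [Ne.symm hij]
      have h3 : e i ⬝ᵥ e j = 0 := by rw [hd]; simp [hij]
      have h4 : e j ⬝ᵥ e j = 1 := by rw [hd]; simp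
      exact Bb_formula 𝒜 hP h1 h2 h3 h4
  intro X
  have hsymX : ∀ p q, (X : M) p q = (X : M) q p := by
    intro p q
    have h := congrFun (congrFun X.2 q) p
    rwa [Matrix.transpose_apply] at h
  have hXd : X = ∑ i : Fin d, ∑ j : Fin d, (2⁻¹ * (X : M) i j) • Sv (e i) (e j) := by
    apply Subtype.ext
    push_cast
    ext k l
    simp only [Matrix.sum_apply, Matrix.smul_apply, Matrix.add_apply, Sv_coe,
      vecMulVec_apply, smul_eq_mul, he, Pi.single_apply, mul_add, mul_ite, ite_mul,
      mul_one, one_mul, mul_zero, zero_mul, Finset.sum_add_distrib, Finset.sum_ite_eq,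
      Finset.sum_ite_eq', Finset.sum_ite_irrel, Finset.sum_const_zero,
      Finset.mem_univ, if_true]
    rw [hsymX l k]
    ring
  have hAX : (𝒜 X : M) = ∑ i : Fin d, ∑ j : Fin d, (2⁻¹ * (X : M) i j) •
      (vecMulVec (e i) (w j) + vecMulVec (w j) (e i)
        + vecMulVec (e j) (w i) + vecMulVec (w i) (e j)) := by
    conv_lhs => rw [hXd]
    rw [map_sum]
    simp only [map_sum, _root_.map_smul, AddSubmonoidClass.coe_finset_sum,
      SetLike.val_smul]
    exact Finset.sum_congr rfl fun i _ => Finset.sum_congr rfl fun j _ => by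
      rw [← hpair i j]; rfl
  rw [hAX]
  ext k l
  simp only [Matrix.sum_apply, Matrix.smul_apply, Matrix.add_apply, vecMulVec_apply,
    smul_eq_mul, Matrix.mul_apply, Matrix.transpose_apply, Matrix.of_apply, he,
    Pi.single_apply, mul_add, mul_ite, ite_mul, mul_one, one_mul, mul_zero, zero_mul,
    Finset.sum_add_distrib, Finset.sum_ite_eq, Finset.sum_ite_eq',
    Finset.sum_ite_irrel, Finset.sum_const_zero, Finset.mem_univ, if_true]
  have hmerge : ∀ f g : Fin d → ℝ, ((∑ m : Fin d, f m) + ∑ m : Fin d, g m)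
      = ∑ m : Fin d, (f m + g m) := fun f g => Finset.sum_add_distrib.symm
  rw [hmerge, hmerge, hmerge, hmerge]
  refine Finset.sum_congr rfl fun m _ => ?_
  linear_combination (2⁻¹ * w m l) * (hsymX m k) + (2⁻¹ * w m k) * (hsymX l m)

end PsdCore
end part4

section part5

attribute [local instance] Matrix.frobeniusNormedRing Matrix.frobeniusNormedAlgebra

open NormedSpace ContinuousLinearMap

/-- Intertwining passes to operator exponentials. -/
lemma comp_exp_comm {E F : Type*} [NormedAddCommGroup E] [NormedSpace ℝ E]
    [NormedAddCommGroup F] [NormedSpace ℝ F] [CompleteSpace E] [CompleteSpace F]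
    (f : E →L[ℝ] F) (a : E →L[ℝ] E) (b : F →L[ℝ] F) (h : b.comp f = f.comp a) :
    (NormedSpace.exp b).comp f = f.comp (NormedSpace.exp a) := by
  have hpow : ∀ n : ℕ, (b ^ n).comp f = f.comp (a ^ n) := by
    intro n
    induction n with
    | zero =>
        ext v; simp [pow_zero]
    | succ n ih =>
        rw [pow_succ, pow_succ, ContinuousLinearMap.mul_def, ContinuousLinearMap.mul_def,
          ContinuousLinearMap.comp_assoc, h, ← ContinuousLinearMap.comp_assoc, ih,
          ContinuousLinearMap.comp_assoc]
  have hsb := NormedSpace.expSeries_summable' (𝕂 := ℝ) b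
  have hsa := NormedSpace.expSeries_summable' (𝕂 := ℝ) a
  rw [NormedSpace.exp_eq_tsum ℝ, NormedSpace.exp_eq_tsum ℝ]
  calc (∑' n : ℕ, ((n.factorial : ℝ)⁻¹) • b ^ n).comp f
      = ((ContinuousLinearMap.compL ℝ E F F).flip f) (∑' n : ℕ, ((n.factorial : ℝ)⁻¹) • b ^ n) := rfl
    _ = ∑' n : ℕ, ((ContinuousLinearMap.compL ℝ E F F).flip f) (((n.factorial : ℝ)⁻¹) • b ^ n) :=
        ContinuousLinearMap.map_tsum _ hsb
    _ = ∑' n : ℕ, ((n.factorial : ℝ)⁻¹) • (b ^ n).comp f := by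
        refine tsum_congr fun n => ?_
        rw [_root_.map_smul]
        rfl
    _ = ∑' n : ℕ, ((n.factorial : ℝ)⁻¹) • f.comp (a ^ n) := by
        refine tsum_congr fun n => ?_
        rw [hpow n]
    _ = ∑' n : ℕ, (ContinuousLinearMap.compL ℝ E E F f) (((n.factorial : ℝ)⁻¹) • a ^ n) := by
        refine tsum_congr fun n => ?_
        rw [_root_.map_smul]
        rfl
    _ = (ContinuousLinearMap.compL ℝ E E F f) (∑' n : ℕ, ((n.factorial : ℝ)⁻¹) • a ^ n) :=
        (ContinuousLinearMap.map_tsum _ hsa).symm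
    _ = f.comp (∑' n : ℕ, ((n.factorial : ℝ)⁻¹) • a ^ n) := rfl

variable {d : ℕ}
local notation "M" => Matrix (Fin d) (Fin d) ℝ

lemma mulL_pow (B : M) (n : ℕ) :
    (ContinuousLinearMap.mul ℝ M B) ^ n = ContinuousLinearMap.mul ℝ M (B ^ n) := by
  induction n with
  | zero => ext X; simp [pow_zero]
  | succ n ih =>
      rw [pow_succ, ContinuousLinearMap.mul_def, ih]
      refine ContinuousLinearMap.ext fun X => ?_
      simp only [ContinuousLinearMap.comp_apply, ContinuousLinearMap.mul_apply']
      rw [← mul_assoc, ← pow_succ]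

lemma mulR_pow (B : M) (n : ℕ) :
    ((ContinuousLinearMap.mul ℝ M).flip B) ^ n = (ContinuousLinearMap.mul ℝ M).flip (B ^ n) := by
  induction n with
  | zero => ext X; simp [pow_zero]
  | succ n ih =>
      rw [pow_succ, ContinuousLinearMap.mul_def, ih]
      refine ContinuousLinearMap.ext fun X => ?_
      simp only [ContinuousLinearMap.comp_apply, ContinuousLinearMap.flip_apply,
        ContinuousLinearMap.mul_apply']
      rw [mul_assoc, ← pow_succ']

lemma exp_mulL (B : M) :
    NormedSpace.exp (ContinuousLinearMap.mul ℝ M B)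
      = ContinuousLinearMap.mul ℝ M (NormedSpace.exp B) := by
  rw [NormedSpace.exp_eq_tsum ℝ, NormedSpace.exp_eq_tsum ℝ]
  have hs := NormedSpace.expSeries_summable' (𝕂 := ℝ) B
  erw [ContinuousLinearMap.map_tsum _ hs]
  refine tsum_congr fun n => ?_
  rw [_root_.map_smul, mulL_pow]

lemma exp_mulR (B : M) :
    NormedSpace.exp ((ContinuousLinearMap.mul ℝ M).flip B)
      = (ContinuousLinearMap.mul ℝ M).flip (NormedSpace.exp B) := by
  rw [NormedSpace.exp_eq_tsum ℝ, NormedSpace.exp_eq_tsum ℝ]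
  have hs := NormedSpace.expSeries_summable' (𝕂 := ℝ) B
  erw [ContinuousLinearMap.map_tsum _ hs]
  refine tsum_congr fun n => ?_
  rw [_root_.map_smul, mulR_pow]

lemma exp_conj_op (A X : M) :
    NormedSpace.exp (ContinuousLinearMap.mul ℝ M A + (ContinuousLinearMap.mul ℝ M).flip Aᵀ) X
      = NormedSpace.exp A * X * NormedSpace.exp Aᵀ := by
  letI : NormedAlgebra ℚ (type_of% (ContinuousLinearMap.mul ℝ M A)) :=
    NormedAlgebra.restrictScalars ℚ ℝ _
  have hcomm : Commute (ContinuousLinearMap.mul ℝ M A) ((ContinuousLinearMap.mul ℝ M).flip Aᵀ) := by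
    unfold Commute SemiconjBy
    ext Y
    simp only [ContinuousLinearMap.mul_def, ContinuousLinearMap.comp_apply,
      ContinuousLinearMap.mul_apply', ContinuousLinearMap.flip_apply]
    rw [mul_assoc]
  rw [NormedSpace.exp_add_of_commute hcomm, exp_mulL, exp_mulR]
  simp only [ContinuousLinearMap.mul_def, ContinuousLinearMap.comp_apply,
    ContinuousLinearMap.mul_apply', ContinuousLinearMap.flip_apply]
  rw [mul_assoc]

lemma transpose_exp (B : M) : (NormedSpace.exp B)ᵀ = NormedSpace.exp Bᵀ := by
  classical
  let tL : M →L[ℝ] M := LinearMap.toContinuousLinearMap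
    { toFun := Matrix.transpose
      map_add' := fun a b => Matrix.transpose_add a b
      map_smul' := fun c a => Matrix.transpose_smul c a }
  have hs := NormedSpace.expSeries_summable' (𝕂 := ℝ) B
  have h1 : (NormedSpace.exp B)ᵀ = tL (NormedSpace.exp B) := rfl
  rw [h1]
  simp only [NormedSpace.exp_eq_tsum ℝ]
  erw [ContinuousLinearMap.map_tsum _ hs]
  refine tsum_congr fun n => ?_
  show ((n.factorial : ℝ)⁻¹ • B ^ n)ᵀ = _
  rw [Matrix.transpose_smul]
  congr 1
  show (B ^ n)ᵀ = (Bᵀ) ^ n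
  exact Matrix.transpose_pow B n

lemma exp_mul_exp_neg (B : M) :
    NormedSpace.exp B * NormedSpace.exp (-B) = 1 := by
  rw [← Matrix.exp_add_of_commute _ _ (Commute.refl B).neg_right]
  simp [NormedSpace.exp_zero]

end part5


section genexp

variable {E F : Type*} [NormedAddCommGroup E] [NormedSpace ℝ E] [CompleteSpace E]
  [NormedAddCommGroup F] [NormedSpace ℝ F] [CompleteSpace F]

lemma gen_exp_add (a : E →L[ℝ] E) (t s : ℝ) (v : E) :
    NormedSpace.exp (t • a) (NormedSpace.exp (s • a) v)
      = NormedSpace.exp ((t + s) • a) v := by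
  letI : NormedAlgebra ℚ (E →L[ℝ] E) := NormedAlgebra.restrictScalars ℚ ℝ _
  have hcomm : Commute (t • a) (s • a) := ((Commute.refl a).smul_left t).smul_right s
  rw [add_smul, NormedSpace.exp_add_of_commute hcomm]
  rfl

lemma gen_exp_zero (a : E →L[ℝ] E) (v : E) :
    NormedSpace.exp ((0 : ℝ) • a) v = v := by
  rw [zero_smul, NormedSpace.exp_zero]
  rfl

lemma gen_intertwine_apply (f : E →L[ℝ] F) (a : E →L[ℝ] E) (b : F →L[ℝ] F)
    (h : b.comp f = f.comp a) (v : E) :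
    f (NormedSpace.exp a v) = NormedSpace.exp b (f v) := by
  have h2 := comp_exp_comm f a b h
  exact (congrArg (fun g : E →L[ℝ] F => g v) h2).symm

lemma gen_deriv (a : E →L[ℝ] E) (g : (E →L[ℝ] E) →L[ℝ] ℝ) :
    HasDerivAt (fun t : ℝ => g (NormedSpace.exp (t • a))) (g a) 0 := by
  have h1 := hasDerivAt_exp_smul_const (𝕂 := ℝ) a (0 : ℝ)
  have h2 := g.hasFDerivAt.comp_hasDerivAt 0 h1
  have h3 : NormedSpace.exp ((0 : ℝ) • a) * a = a := by
    rw [zero_smul, NormedSpace.exp_zero, one_mul]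
  rw [h3] at h2
  exact h2

end genexp

section part6

attribute [local instance] Matrix.frobeniusNormedRing Matrix.frobeniusNormedAlgebra

open NormedSpace ContinuousLinearMap

variable {d : ℕ}
local notation "M" => Matrix (Fin d) (Fin d) ℝ

variable (𝒜 : symMatrices d →ₗ[ℝ] symMatrices d)

lemma opExp_opExp (t s : ℝ) (Z : symMatrices d) :
    opExp 𝒜 t (opExp 𝒜 s Z) = opExp 𝒜 (t + s) Z :=
  gen_exp_add (LinearMap.toContinuousLinearMap 𝒜) t s Z

lemma opExp_zero (Z : symMatrices d) : opExp 𝒜 0 Z = Z :=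
  gen_exp_zero (LinearMap.toContinuousLinearMap 𝒜) Z

/-- description of `opExp` when `𝒜` has Lyapunov form -/
lemma opExp_conj (A : M)
    (hA : ∀ X : symMatrices d, ((𝒜 X : M)) = A * (X : M) + (X : M) * Aᵀ)
    (t : ℝ) (Z : symMatrices d) :
    ((opExp 𝒜 t Z : symMatrices d) : M)
      = NormedSpace.exp (t • A) * (Z : M) * (NormedSpace.exp (t • A))ᵀ := by
  set 𝒜c := LinearMap.toContinuousLinearMap 𝒜 with h𝒜c
  set b : M →L[ℝ] M := ContinuousLinearMap.mul ℝ M (t • A)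
    + (ContinuousLinearMap.mul ℝ M).flip ((t • A)ᵀ) with hb
  have hcomm : b.comp ((symMatrices d).subtypeL) = ((symMatrices d).subtypeL).comp (t • 𝒜c) := by
    refine ContinuousLinearMap.ext fun W => ?_
    show (t • A) * (W : M) + (W : M) * (t • A)ᵀ = (((t • 𝒜c) W : symMatrices d) : M)
    have h2 : (((t • 𝒜c) W : symMatrices d) : M) = t • ((𝒜 W : M)) := rfl
    rw [h2, hA W, Matrix.transpose_smul, smul_mul_assoc, Matrix.mul_smul, smul_add]
  have h5 := gen_intertwine_apply ((symMatrices d).subtypeL) (t • 𝒜c) b hcomm Z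
  refine Eq.trans h5 ?_
  rw [hb, exp_conj_op, transpose_exp]
  rfl

lemma psd_congr {Z G : M} (hZ : Z.PosSemidef) : (G * Z * Gᵀ).PosSemidef := by
  have := hZ.mul_mul_conjTranspose_same G
  rwa [Matrix.conjTranspose_eq_transpose_of_trivial] at this

lemma qv_psd (x : Fin d → ℝ) : (Matrix.vecMulVec x x).PosSemidef := by
  refine Matrix.PosSemidef.of_dotProduct_mulVec_nonneg ?_ ?_
  · show _ = _
    rw [Matrix.conjTranspose_eq_transpose_of_trivial]
    exact PsdCore.mem_q x
  · intro y
    rw [star_trivial, PsdCore.vmv_mulVec, dotProduct_smul]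
    rw [smul_eq_mul, dotProduct_comm y x]
    exact mul_self_nonneg _

lemma backward (A : M)
    (hA : ∀ X : symMatrices d, ((𝒜 X : M)) = A * (X : M) + (X : M) * Aᵀ)
    (t : ℝ) : ⇑(opExp 𝒜 t) '' psdCone d = psdCone d := by
  apply Set.Subset.antisymm
  · rintro W ⟨Z, hZ, rfl⟩
    show ((opExp 𝒜 t Z : symMatrices d) : M).PosSemidef
    rw [opExp_conj 𝒜 A hA t Z]
    exact psd_congr hZ
  · intro W hW
    refine ⟨opExp 𝒜 (-t) W, ?_, ?_⟩
    · show ((opExp 𝒜 (-t) W : symMatrices d) : M).PosSemidef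
      rw [opExp_conj 𝒜 A hA (-t) W]
      exact psd_congr hW
    · rw [opExp_opExp 𝒜 t (-t) W, show t + -t = 0 by ring, opExp_zero]

lemma hP_of_invariance
    (h : ∀ t : ℝ, 0 ≤ t → ⇑(opExp 𝒜 t) '' psdCone d = psdCone d) :
    ∀ x y : Fin d → ℝ, x ⬝ᵥ y = 0 → y ⬝ᵥ (PsdCore.Phi 𝒜 x *ᵥ y) = 0 := by
  have hmem : ∀ (t : ℝ) (Z : symMatrices d), Z ∈ psdCone d → opExp 𝒜 t Z ∈ psdCone d := by
    intro t Z hZ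
    rcases le_or_gt 0 t with ht | ht
    · rw [← h t ht]
      exact Set.mem_image_of_mem _ hZ
    · have h2 : Z ∈ ⇑(opExp 𝒜 (-t)) '' psdCone d := by
        rw [h (-t) (by linarith)]
        exact hZ
      obtain ⟨W, hW, rfl⟩ := h2
      rw [opExp_opExp 𝒜 t (-t) W, show t + -t = 0 by ring, opExp_zero]
      exact hW
  intro x y hxy
  set Z : symMatrices d := PsdCore.Qv x with hZdef
  have hZ : Z ∈ psdCone d := qv_psd x
  let ℓ : Matrix (Fin d) (Fin d) ℝ →ₗ[ℝ] ℝ :=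
    { toFun := fun N => y ⬝ᵥ (N *ᵥ y)
      map_add' := fun a b => by simp [add_mulVec, dotProduct_add]
      map_smul' := fun c a => by simp [smul_mulVec, dotProduct_smul] }
  let g : ((symMatrices d) →L[ℝ] (symMatrices d)) →L[ℝ] ℝ :=
    (LinearMap.toContinuousLinearMap ℓ).comp
      (((symMatrices d).subtypeL).comp (ContinuousLinearMap.apply ℝ (symMatrices d) Z))
  have hder := gen_deriv (LinearMap.toContinuousLinearMap 𝒜) g
  have hder' : HasDerivAt (fun t : ℝ => y ⬝ᵥ (((opExp 𝒜 t Z : symMatrices d) : M) *ᵥ y))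
      (g (LinearMap.toContinuousLinearMap 𝒜)) 0 := hder
  have hf0 : y ⬝ᵥ (((opExp 𝒜 0 Z : symMatrices d) : M) *ᵥ y) = 0 := by
    rw [opExp_zero]
    show y ⬝ᵥ ((Matrix.vecMulVec x x) *ᵥ y) = 0
    rw [PsdCore.vmv_mulVec, dotProduct_smul, hxy]
    simp
  have hpos : ∀ t : ℝ, 0 ≤ y ⬝ᵥ (((opExp 𝒜 t Z : symMatrices d) : M) *ᵥ y) := by
    intro t
    have h4 : ((opExp 𝒜 t Z : symMatrices d) : M).PosSemidef := hmem t Z hZ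
    have h5 := h4.dotProduct_mulVec_nonneg y
    rwa [star_trivial] at h5
  have hmin : IsLocalMin (fun t : ℝ => y ⬝ᵥ (((opExp 𝒜 t Z : symMatrices d) : M) *ᵥ y)) 0 := by
    refine Filter.Eventually.of_forall fun t => ?_
    simp only []
    rw [hf0]
    exact hpos t
  have hzero := hmin.hasDerivAt_eq_zero hder'
  exact hzero

end part6

/-- A linear map `𝒜 : S_d → S_d` satisfies `exp(t𝒜)(S_d^+) = S_d^+` for all
`t ≥ 0` if and only if there is a matrix `A ∈ M_d(ℝ)` with `𝒜X = AX + XAᵀ` for all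
`X ∈ S_d`. -/
theorem expOp_maps_psd_onto_iff (d : ℕ) (hd : 1 ≤ d)
    (𝒜 : symMatrices d →ₗ[ℝ] symMatrices d) :
    (∀ t : ℝ, 0 ≤ t → ⇑(opExp 𝒜 t) '' psdCone d = psdCone d) ↔
      ∃ A : Matrix (Fin d) (Fin d) ℝ, ∀ X : symMatrices d,
        ((𝒜 X : Matrix (Fin d) (Fin d) ℝ)) =
          A * (X : Matrix (Fin d) (Fin d) ℝ) + (X : Matrix (Fin d) (Fin d) ℝ) * Aᵀ := by
  constructor
  · intro h
    exact PsdCore.exists_lyapunov 𝒜 (hP_of_invariance 𝒜 h)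
  · rintro ⟨A, hA⟩ t _
    exact backward 𝒜 A hA t
end

section
/- There exist a matrix A ∈ M_2(ℝ) all of whose eigenvalues have strictly negative real part and a positive definite matrix γ ∈ S_2^{++} such that −Aγ − γAᵀ is not positive semidefinite. Concretely, for A = [[−1/10, −1/3], [−1/3, −2]] and γ = [[2, −2/3], [−2/3, 2]], the eigenvalues of A are −21/20 ± √3649/60 (both strictly negative), the eigenvalues of γ are 8/3 and 4/3 (so γ is positive definite), but −Aγ − γAᵀ has eigenvalues 169/45 ± √130/3, one of which is strictly negative, so −Aγ − γAᵀ ∉ S_2^+. -/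
open Matrix Polynomial

lemma map_A : ((!![-1/10, -1/3; -1/3, -2] : Matrix (Fin 2) (Fin 2) ℝ).map (Complex.ofReal)) =
    !![-1/10, -1/3; -1/3, -2] := by
  ext i j
  fin_cases i <;> fin_cases j <;> simp [Matrix.map_apply]

lemma root_eq (z : ℂ)
    (h : ((!![-1/10, -1/3; -1/3, -2] : Matrix (Fin 2) (Fin 2) ℂ).charpoly).IsRoot z) :
    z^2 + (21/10)*z + 4/45 = 0 := by
  rw [Polynomial.IsRoot, Matrix.charpoly, Matrix.det_fin_two,
    charmatrix_apply_eq, charmatrix_apply_eq,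
    charmatrix_apply_ne _ _ _ (by decide : (0 : Fin 2) ≠ 1),
    charmatrix_apply_ne _ _ _ (by decide : (1 : Fin 2) ≠ 0)] at h
  simp at h
  linear_combination h

/-- There exist `A ∈ M_2(ℝ)` all of whose (complex) eigenvalues have
strictly negative real part and a positive definite `γ ∈ S_2^{++}` such that
`−Aγ − γAᵀ` is not positive semidefinite; concretely `A = [[−1/10, −1/3], [−1/3, −2]]`
and `γ = [[2, −2/3], [−2/3, 2]]`. -/
theorem exists_negative_spectrum_posDef_not_posSemidef :
    ∃ A γ : Matrix (Fin 2) (Fin 2) ℝ,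
      A = !![-1/10, -1/3; -1/3, -2] ∧
      γ = !![2, -2/3; -2/3, 2] ∧
      (∀ z : ℂ, (Matrix.charpoly (A.map (Complex.ofReal))).IsRoot z → z.re < 0) ∧
      γ.PosDef ∧
      ¬ (-(A * γ) - γ * Aᵀ).PosSemidef := by
  refine ⟨_, _, rfl, rfl, ?_, ?_, ?_⟩
  · intro z hz
    rw [map_A] at hz
    have hz' := root_eq z hz
    have hre := congrArg Complex.re hz'
    have him := congrArg Complex.im hz'
    simp [Complex.add_re, Complex.add_im, Complex.mul_re, Complex.mul_im, pow_two] at hre him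
    by_contra hle
    push_neg at hle
    have hy : z.im = 0 := by
      rcases mul_eq_zero.mp (by nlinarith [him] : (2 * z.re + 21/10) * z.im = 0) with h | h
      · nlinarith
      · exact h
    nlinarith [hre, hy]
  · refine Matrix.PosDef.of_dotProduct_mulVec_pos ?_ ?_
    · show _ = _
      ext i j
      fin_cases i <;> fin_cases j <;> simp [Matrix.conjTranspose, Matrix.vecHead, Matrix.vecTail]
    · intro x hx
      have hx' : x 0 ≠ 0 ∨ x 1 ≠ 0 := by
        by_contra h
        push_neg at h
        apply hx
        ext i; fin_cases i <;> simp [h.1, h.2]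
      have h0 : x 0 ^ 2 + x 1 ^ 2 > 0 := by
        rcases hx' with h | h <;> positivity
      simp [dotProduct, Matrix.mulVec, Fin.sum_univ_two]
      nlinarith
  · intro h
    have key : (-(!![-1/10, -1/3; -1/3, -2] * !![2, -2/3; -2/3, 2]) -
        !![2, -2/3; -2/3, 2] * (!![-1/10, -1/3; -1/3, -2] : Matrix (Fin 2) (Fin 2) ℝ)ᵀ) =
        !![-2/45, -1/15; -1/15, 68/9] := by
      ext i j
      fin_cases i <;> fin_cases j <;>
        norm_num [Matrix.mul_apply, Fin.sum_univ_two, Matrix.transpose_apply, Matrix.vecHead, Matrix.vecTail, Matrix.vecMul, dotProduct]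
    rw [key] at h
    have := h.dotProduct_mulVec_nonneg ![1, 0]
    simp [dotProduct, Matrix.mulVec, Fin.sum_univ_two] at this
    norm_num at this
end

section
/- Let d ∈ ℕ, d ≥ 1, and let ν be a (σ-finite) measure on ℝ^d that is concentrated on the nonnegative orthant [0, ∞)^d and satisfies ∫ ‖x‖² ν(dx) < ∞. Then the matrix ∫ x xᵀ ν(dx) ∈ M_d(ℝ) is completely positive. -/
open Matrix MeasureTheory

/-- A matrix `C ∈ M_d(ℝ)` is completely positive if `C = B * Bᵀ` for some `d × k` matrix `B`
with nonnegative entries. -/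
def CompletelyPositive {d : ℕ} (C : Matrix (Fin d) (Fin d) ℝ) : Prop :=
  ∃ (k : ℕ) (B : Matrix (Fin d) (Fin k) ℝ), (∀ i j, 0 ≤ B i j) ∧ C = B * Bᵀ

open Filter Topology Set

/-- Auxiliary predicate: `C` (as a function) is a sum of `k` rank-one terms `v vᵀ` with
`v` entrywise nonnegative. -/
def IsCPFun {d : ℕ} (k : ℕ) (C : Fin d → Fin d → ℝ) : Prop :=
  ∃ v : Fin k → Fin d → ℝ, (∀ l i, 0 ≤ v l i) ∧ ∀ i j, C i j = ∑ l, v l i * v l j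

lemma IsCPFun.mono {d k m : ℕ} {C : Fin d → Fin d → ℝ} (h : IsCPFun k C) (hkm : k ≤ m) :
    IsCPFun m C := by
  obtain ⟨v, hv, hC⟩ := h
  set w : ℕ → Fin d → ℝ := fun l => if h : l < k then v ⟨l, h⟩ else 0 with hw
  refine ⟨fun l => w l, ?_, ?_⟩
  · intro l i
    by_cases h : (l : ℕ) < k
    · simp only [hw, dif_pos h]; exact hv _ i
    · simp [hw, h]
  · intro i j
    rw [hC i j]
    calc ∑ l : Fin k, v l i * v l j
        = ∑ l ∈ Finset.range k, w l i * w l j := by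
          rw [← Fin.sum_univ_eq_sum_range (fun l => w l i * w l j) k]
          refine Finset.sum_congr rfl fun l _ => ?_
          simp [hw, l.isLt]
      _ = ∑ l ∈ Finset.range m, w l i * w l j := by
          refine (Finset.sum_subset (Finset.range_subset_range.2 hkm) fun l _ hl => ?_)
          have : ¬ l < k := fun h => hl (Finset.mem_range.2 h)
          simp [hw, this]
      _ = ∑ l : Fin m, w l i * w l j := (Fin.sum_univ_eq_sum_range _ m).symm

/-- Carathéodory-type reduction: any finite nonnegative rank-one decomposition can be
compressed to one with `d * d` terms. -/
lemma IsCPFun.reduce {d : ℕ} :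
    ∀ (k : ℕ) (C : Fin d → Fin d → ℝ), IsCPFun k C → IsCPFun (d * d) C := by
  intro k
  induction k with
  | zero => exact fun C h => h.mono (Nat.zero_le _)
  | succ k ih =>
    intro C h
    by_cases hk : k + 1 ≤ d * d
    · exact h.mono hk
    push_neg at hk
    obtain ⟨v, hv, hC⟩ := h
    have hfr : Module.finrank ℝ (Fin d → Fin d → ℝ) = d * d := by
      rw [Module.finrank_pi_fintype]
      simp [Module.finrank_pi, Finset.sum_const, Fintype.card_fin, smul_eq_mul]
    have hdep : ¬ LinearIndependent ℝ
        (fun l : Fin (k + 1) => (fun i j => v l i * v l j : Fin d → Fin d → ℝ)) := by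
      intro hli
      have := hli.fintype_card_le_finrank
      rw [hfr, Fintype.card_fin] at this
      omega
    obtain ⟨c, hc0, l₁, hl₁⟩ := Fintype.not_linearIndependent_iff.1 hdep
    obtain ⟨c, hc0, l₂, hl₂⟩ :
        ∃ c : Fin (k + 1) → ℝ,
          (∑ l, c l • (fun i j => v l i * v l j : Fin d → Fin d → ℝ) = 0) ∧ ∃ l, 0 < c l := by
      rcases lt_trichotomy (c l₁) 0 with h | h | h
      · refine ⟨-c, ?_, l₁, by simpa using h⟩
        have : -∑ l, c l • (fun i j => v l i * v l j : Fin d → Fin d → ℝ) = 0 := by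
          rw [hc0, neg_zero]
        simpa [neg_smul] using this
      · exact absurd h hl₁
      · exact ⟨c, hc0, l₁, h⟩
    obtain ⟨l₀, -, hmax⟩ := Finset.exists_max_image Finset.univ c ⟨l₂, Finset.mem_univ _⟩
    have hl₀pos : 0 < c l₀ := lt_of_lt_of_le hl₂ (hmax l₂ (Finset.mem_univ _))
    set a : Fin (k + 1) → ℝ := fun l => 1 - c l / c l₀ with ha
    have ha0 : ∀ l, 0 ≤ a l := fun l =>
      sub_nonneg.2 ((div_le_one hl₀pos).2 (hmax l (Finset.mem_univ _)))
    set u : Fin (k + 1) → Fin d → ℝ := fun l i => Real.sqrt (a l) * v l i with hu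
    have hsum : ∀ i j, C i j = ∑ l, u l i * u l j := by
      intro i j
      have hzero : ∑ l, c l * (v l i * v l j) = 0 := by
        have := congrFun (congrFun hc0 i) j
        simpa [Finset.sum_apply, Pi.smul_apply, smul_eq_mul] using this
      calc C i j = ∑ l, v l i * v l j := hC i j
        _ = (∑ l, v l i * v l j) - (c l₀)⁻¹ * ∑ l, c l * (v l i * v l j) := by
            rw [hzero]; ring
        _ = ∑ l, a l * (v l i * v l j) := by
            rw [Finset.mul_sum, ← Finset.sum_sub_distrib]
            refine Finset.sum_congr rfl fun l _ => ?_
            rw [ha]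
            field_simp
        _ = ∑ l, u l i * u l j := by
            refine Finset.sum_congr rfl fun l _ => ?_
            rw [hu]
            calc a l * (v l i * v l j)
                = (Real.sqrt (a l) * Real.sqrt (a l)) * (v l i * v l j) := by
                  rw [Real.mul_self_sqrt (ha0 l)]
              _ = Real.sqrt (a l) * v l i * (Real.sqrt (a l) * v l j) := by ring
    have hu0 : ∀ i, u l₀ i = 0 := by
      intro i
      have : a l₀ = 0 := by
        rw [ha]
        field_simp
        norm_num
      simp [hu, this]
    refine ih C ⟨fun l => u (l₀.succAbove l),
      fun l i => mul_nonneg (Real.sqrt_nonneg _) (hv _ i), ?_⟩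
    intro i j
    rw [hsum i j, Fin.sum_univ_succAbove (fun l => u l i * u l j) l₀]
    simp [hu0]

/-- The set of `IsCPFun (d*d)` functions is sequentially closed (via entrywise limits). -/
lemma isCPFun_limit {d : ℕ} {C : Fin d → Fin d → ℝ} {u : ℕ → Fin d → Fin d → ℝ}
    (hu : ∀ n, IsCPFun (d * d) (u n))
    (hlim : ∀ i j, Tendsto (fun n => u n i j) atTop (𝓝 (C i j))) :
    IsCPFun (d * d) C := by
  choose v hv0 hv using hu
  have hBdd : ∀ i : Fin d, ∃ M : ℝ, ∀ n, u n i i ≤ M := by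
    intro i
    obtain ⟨M, hM⟩ := (hlim i i).bddAbove_range
    exact ⟨M, fun n => hM (Set.mem_range_self n)⟩
  choose M hM using hBdd
  set R : ℝ := ∑ i, |M i| with hR
  have hsq : ∀ n (l : Fin (d * d)) (i : Fin d), (v n l i) ^ 2 ≤ R := by
    intro n l i
    have h1 : (v n l i) ^ 2 ≤ u n i i := by
      rw [hv n i i, sq]
      exact Finset.single_le_sum (fun l' _ => mul_self_nonneg (v n l' i))
        (Finset.mem_univ l)
    have h2 : u n i i ≤ R := by
      refine le_trans (hM i n) (le_trans (le_abs_self _) ?_)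
      exact Finset.single_le_sum (f := fun i' => |M i'|) (fun _ _ => abs_nonneg _)
        (Finset.mem_univ i)
    exact le_trans h1 h2
  have hRb : ∀ n (l : Fin (d * d)) (i : Fin d), v n l i ≤ Real.sqrt R := by
    intro n l i
    calc v n l i = Real.sqrt ((v n l i) ^ 2) := (Real.sqrt_sq (hv0 n l i)).symm
      _ ≤ Real.sqrt R := Real.sqrt_le_sqrt (hsq n l i)
  set K : Set (Fin (d * d) → Fin d → ℝ) :=
    Set.univ.pi fun _ => Set.univ.pi fun _ => Set.Icc 0 (Real.sqrt R) with hK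
  have hKc : IsCompact K := isCompact_univ_pi fun _ => isCompact_univ_pi fun _ => isCompact_Icc
  have hvK : ∀ n, v n ∈ K := fun n =>
    Set.mem_univ_pi.2 fun l => Set.mem_univ_pi.2 fun i => ⟨hv0 n l i, hRb n l i⟩
  obtain ⟨w, hwK, φ, hφ, hconv⟩ := hKc.tendsto_subseq hvK
  have hw0 : ∀ l i, 0 ≤ w l i := fun l i =>
    ((Set.mem_univ_pi.1 (Set.mem_univ_pi.1 hwK l)) i).1
  refine ⟨w, hw0, fun i j => ?_⟩
  have hentry : ∀ (l : Fin (d * d)) (i : Fin d),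
      Tendsto (fun n => v (φ n) l i) atTop (𝓝 (w l i)) := by
    intro l i
    exact tendsto_pi_nhds.1 (tendsto_pi_nhds.1 hconv l) i
  have h1 : Tendsto (fun n => u (φ n) i j) atTop (𝓝 (C i j)) :=
    (hlim i j).comp hφ.tendsto_atTop
  have h2 : Tendsto (fun n => u (φ n) i j) atTop (𝓝 (∑ l, w l i * w l j)) := by
    have h3 : (fun n => u (φ n) i j) = fun n => ∑ l, v (φ n) l i * v (φ n) l j :=
      funext fun n => hv (φ n) i j
    rw [h3]
    exact tendsto_finset_sum _ fun l _ => (hentry l i).mul (hentry l j)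
  exact tendsto_nhds_unique h1 h2

lemma isCPFun_zero {d : ℕ} : IsCPFun (d * d) (0 : Fin d → Fin d → ℝ) :=
  ⟨0, fun _ _ => le_refl _, fun i j => by simp⟩

lemma isCPFun_smul {d : ℕ} {p : Fin d → Fin d → ℝ} (h : IsCPFun (d * d) p) {t : ℝ}
    (ht : 0 ≤ t) : IsCPFun (d * d) (t • p) := by
  obtain ⟨v, hv0, hv⟩ := h
  refine ⟨fun l i => Real.sqrt t * v l i,
    fun l i => mul_nonneg (Real.sqrt_nonneg _) (hv0 l i), fun i j => ?_⟩
  calc (t • p) i j = t * p i j := rfl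
    _ = t * ∑ l, v l i * v l j := by rw [hv i j]
    _ = ∑ l, t * (v l i * v l j) := Finset.mul_sum _ _ _
    _ = ∑ l, Real.sqrt t * v l i * (Real.sqrt t * v l j) := by
        refine Finset.sum_congr rfl fun l _ => ?_
        linear_combination (-(v l i * v l j)) * Real.mul_self_sqrt ht

lemma isCPFun_convex (d : ℕ) : Convex ℝ {p : Fin d → Fin d → ℝ | IsCPFun (d * d) p} := by
  intro x hx y hy s t hs ht hst
  obtain ⟨v, hv0, hvx⟩ := hx
  obtain ⟨w, hw0, hwy⟩ := hy
  set z : Fin (d * d + d * d) → Fin d → ℝ :=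
    Fin.append (fun l i => Real.sqrt s * v l i) (fun l i => Real.sqrt t * w l i) with hz
  have hz0 : ∀ l i, 0 ≤ z l i := by
    intro l i
    refine Fin.addCases (motive := fun l => 0 ≤ z l i) ?_ ?_ l
    · intro l₁
      rw [hz, Fin.append_left]
      exact mul_nonneg (Real.sqrt_nonneg _) (hv0 l₁ i)
    · intro l₂
      rw [hz, Fin.append_right]
      exact mul_nonneg (Real.sqrt_nonneg _) (hw0 l₂ i)
  refine IsCPFun.reduce _ _ ⟨z, hz0, fun i j => ?_⟩
  have hsplit : ∑ l, z l i * z l j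
      = s * (∑ l, v l i * v l j) + t * (∑ l, w l i * w l j) := by
    rw [Fin.sum_univ_add (fun l => z l i * z l j)]
    congr 1
    · rw [Finset.mul_sum]
      refine Finset.sum_congr rfl fun l _ => ?_
      show z (Fin.castAdd _ l) i * z (Fin.castAdd _ l) j = s * (v l i * v l j)
      rw [hz, Fin.append_left]
      linear_combination (v l i * v l j) * Real.mul_self_sqrt hs
    · rw [Finset.mul_sum]
      refine Finset.sum_congr rfl fun l _ => ?_
      show z (Fin.natAdd _ l) i * z (Fin.natAdd _ l) j = t * (w l i * w l j)
      rw [hz, Fin.append_right]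
      linear_combination (w l i * w l j) * Real.mul_self_sqrt ht
  calc (s • x + t • y) i j = s * x i j + t * y i j := rfl
    _ = s * (∑ l, v l i * v l j) + t * (∑ l, w l i * w l j) := by rw [hvx i j, hwy i j]
    _ = ∑ l, z l i * z l j := hsplit.symm

lemma isCPFun_closed (d : ℕ) : IsClosed {p : Fin d → Fin d → ℝ | IsCPFun (d * d) p} := by
  refine IsSeqClosed.isClosed fun u p hus hup => ?_
  exact isCPFun_limit hus fun i j =>
    tendsto_pi_nhds.1 (tendsto_pi_nhds.1 hup i) j

lemma isCPFun_integral_mem {d : ℕ} (μ : Measure (Fin d → ℝ)) [IsFiniteMeasure μ]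
    (horth : ∀ᵐ x ∂μ, ∀ i, 0 ≤ x i)
    (hfi : Integrable (fun x => (fun i j => x i * x j : Fin d → Fin d → ℝ)) μ) :
    IsCPFun (d * d) (∫ x, (fun i j => x i * x j : Fin d → Fin d → ℝ) ∂μ) := by
  rcases eq_or_ne μ 0 with h | h
  · rw [h, integral_zero_measure]
    exact isCPFun_zero
  · haveI : NeZero μ := ⟨h⟩
    have hmem : ∀ᵐ x ∂μ, (fun i j => x i * x j : Fin d → Fin d → ℝ)
        ∈ {p : Fin d → Fin d → ℝ | IsCPFun (d * d) p} := by
      filter_upwards [horth] with x hx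
      have h1 : IsCPFun 1 (fun i j => x i * x j : Fin d → Fin d → ℝ) :=
        ⟨fun _ => x, fun _ i => hx i, fun i j => by simp⟩
      exact IsCPFun.reduce _ _ h1
    have havg := (isCPFun_convex d).average_mem (isCPFun_closed d) hmem hfi
    have hμ0 : (μ Set.univ).toReal ≠ 0 :=
      ENNReal.toReal_ne_zero.2 ⟨fun h0 => h (Measure.measure_univ_eq_zero.1 h0),
        measure_ne_top μ Set.univ⟩
    have key : ∫ x, (fun i j => x i * x j : Fin d → Fin d → ℝ) ∂μ
        = (μ Set.univ).toReal • ⨍ x, (fun i j => x i * x j : Fin d → Fin d → ℝ) ∂μ := by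
      rw [average_eq, smul_smul, measureReal_def, mul_inv_cancel₀ hμ0, one_smul]
    rw [key]
    exact isCPFun_smul havg ENNReal.toReal_nonneg

/-- If `ν` is a σ-finite measure on `ℝ^d` concentrated on the nonnegative
orthant with `∫ ‖x‖² ν(dx) < ∞`, then the second-moment matrix `∫ x xᵀ ν(dx)` is
completely positive. -/
theorem secondMoment_completelyPositive (d : ℕ) (hd : 1 ≤ d)
    (ν : Measure (Fin d → ℝ)) [SigmaFinite ν]
    (hconc : ν {x : Fin d → ℝ | ¬ ∀ i, 0 ≤ x i} = 0)
    (hint : Integrable (fun x : Fin d → ℝ => ‖x‖ ^ 2) ν) :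
    CompletelyPositive (Matrix.of fun i j : Fin d => ∫ x, x i * x j ∂ν) := by
  have horth : ∀ᵐ x ∂ν, ∀ i, 0 ≤ x i := ae_iff.2 hconc
  have hbound : ∀ (x : Fin d → ℝ) (i j : Fin d), ‖x i * x j‖ ≤ ‖x‖ ^ 2 := by
    intro x i j
    calc ‖x i * x j‖ = ‖x i‖ * ‖x j‖ := norm_mul _ _
      _ ≤ ‖x‖ * ‖x‖ :=
        mul_le_mul (norm_le_pi_norm x i) (norm_le_pi_norm x j) (norm_nonneg _) (norm_nonneg _)
      _ = ‖x‖ ^ 2 := (sq ‖x‖).symm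
  have hgi : ∀ i j : Fin d, Integrable (fun x : Fin d → ℝ => x i * x j) ν := by
    intro i j
    refine hint.mono' (((measurable_pi_apply i).mul
      (measurable_pi_apply j)).aestronglyMeasurable) (ae_of_all _ fun x => ?_)
    exact hbound x i j
  have hfmeas : Measurable (fun x : Fin d → ℝ => (fun i j => x i * x j : Fin d → Fin d → ℝ)) :=
    measurable_pi_lambda _ fun i => measurable_pi_lambda _ fun j =>
      (measurable_pi_apply i).mul (measurable_pi_apply j)
  have hfi : Integrable (fun x => (fun i j => x i * x j : Fin d → Fin d → ℝ)) ν := by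
    refine hint.mono' hfmeas.aestronglyMeasurable (ae_of_all _ fun x => ?_)
    rw [pi_norm_le_iff_of_nonneg (by positivity)]
    intro i
    rw [pi_norm_le_iff_of_nonneg (by positivity)]
    intro j
    exact hbound x i j
  set E : ℕ → Set (Fin d → ℝ) := spanningSets ν with hE
  have hCP : ∀ n, IsCPFun (d * d)
      (fun i j => ∫ x in E n, x i * x j ∂ν) := by
    intro n
    haveI : IsFiniteMeasure (ν.restrict (E n)) :=
      ⟨by rw [Measure.restrict_apply_univ]; exact measure_spanningSets_lt_top ν n⟩
    have h1 := isCPFun_integral_mem (ν.restrict (E n)) (ae_restrict_of_ae horth)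
      (hfi.restrict (s := E n))
    have h2 : (∫ x, (fun i j => x i * x j : Fin d → Fin d → ℝ) ∂(ν.restrict (E n)))
        = fun i j => ∫ x in E n, x i * x j ∂ν := by
      funext i j
      have hint1 := (ContinuousLinearMap.proj (R := ℝ)
        (φ := fun _ : Fin d => Fin d → ℝ) i).integrable_comp (hfi.restrict (s := E n))
      have e1 := (ContinuousLinearMap.proj (R := ℝ)
        (φ := fun _ : Fin d => Fin d → ℝ) i).integral_comp_comm (hfi.restrict (s := E n))
      have e2 := (ContinuousLinearMap.proj (R := ℝ)
        (φ := fun _ : Fin d => ℝ) j).integral_comp_comm hint1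
      simp only [ContinuousLinearMap.proj_apply] at e1 e2
      rw [← e1, ← e2]
    rw [← h2]
    exact h1
  have hconv : ∀ i j : Fin d,
      Tendsto (fun n => ∫ x in E n, x i * x j ∂ν) atTop (𝓝 (∫ x, x i * x j ∂ν)) := by
    intro i j
    have hEu : ⋃ n, E n = Set.univ := iUnion_spanningSets ν
    have := tendsto_setIntegral_of_monotone (f := fun x : Fin d → ℝ => x i * x j)
      (μ := ν) (fun n => measurableSet_spanningSets ν n) (monotone_spanningSets ν)
      (by rw [hEu]; exact (integrableOn_univ).2 (hgi i j))
    rwa [hEu, Measure.restrict_univ] at this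
  have hfinal : IsCPFun (d * d) (fun i j => ∫ x, x i * x j ∂ν) :=
    isCPFun_limit hCP hconv
  obtain ⟨v, hv0, hC⟩ := hfinal
  refine ⟨d * d, Matrix.of fun i l => v l i, fun i l => hv0 l i, ?_⟩
  ext i j
  rw [Matrix.mul_apply]
  simp only [Matrix.of_apply, Matrix.transpose_apply]
  exact hC i j
end

section
/- Let d ∈ ℕ, d ≥ 1, let C ∈ S_d^+, and let ρ be a measure on (0, ∞) with ∫ τ² ρ(dτ) < ∞. Define the measure ν on ℝ^d by ν(B) = ∫_{(0,∞)} N_{τC}(B) ρ(dτ) for Borel sets B, where N_{τC} denotes the centered Gaussian distribution on ℝ^d with covariance matrix τC. Then ∫ x xᵀ ν(dx) = (∫ τ ρ(dτ)) C and ∫ vec(x xᵀ) vec(x xᵀ)ᵀ ν(dx) = (∫ τ² ρ(dτ)) (C ⊗ C + K_d (C ⊗ C) + vec(C) vec(C)ᵀ). -/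
open Matrix MeasureTheory ProbabilityTheory
open scoped Kronecker

/-- The vectorisation operator `vec` stacking the columns of a `d × d` matrix below one
another; the entry of `vec A` at index `(j, i)` is `A i j`. -/
def vecOp {d : ℕ} (A : Matrix (Fin d) (Fin d) ℝ) : Fin d × Fin d → ℝ :=
  fun p => A p.2 p.1

/-- The commutation matrix `K_d`, characterised by `K_d * vec A = vec Aᵀ` for all
`A ∈ M_d(ℝ)`. -/
def commutationMatrix (d : ℕ) : Matrix (Fin d × Fin d) (Fin d × Fin d) ℝ :=
  Matrix.of fun p q => if p.1 = q.2 ∧ p.2 = q.1 then 1 else 0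

/-- The standard Gaussian distribution on `ℝ^d` (product of `d` standard normals). -/
noncomputable def stdGaussian (d : ℕ) : Measure (Fin d → ℝ) :=
  Measure.pi fun _ => gaussianReal 0 1

/-- The centered Gaussian distribution `N_{τC}` on `ℝ^d` with covariance matrix `τ C`
(for `τ > 0` and `C ∈ S_d^+`), realised as the image of the standard Gaussian under
`x ↦ (τ C)^{1/2} x = √τ C^{1/2} x`. -/
noncomputable def gaussianScaled {d : ℕ} {C : Matrix (Fin d) (Fin d) ℝ}
    (hC : C.PosSemidef) (τ : ℝ) : Measure (Fin d → ℝ) :=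
  (stdGaussian d).map fun x => Real.sqrt τ • ((hC.1.eigenvectorUnitary : Matrix (Fin d) (Fin d) ℝ) *
    Matrix.diagonal (fun i => Real.sqrt (hC.1.eigenvalues i)) *
    (star hC.1.eigenvectorUnitary : Matrix (Fin d) (Fin d) ℝ)).mulVec x

section Aux

noncomputable def Asq {d : ℕ} {C : Matrix (Fin d) (Fin d) ℝ} (hC : C.PosSemidef) :
    Matrix (Fin d) (Fin d) ℝ :=
  (hC.1.eigenvectorUnitary : Matrix (Fin d) (Fin d) ℝ) *
    Matrix.diagonal (fun i => Real.sqrt (hC.1.eigenvalues i)) *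
    (star hC.1.eigenvectorUnitary : Matrix (Fin d) (Fin d) ℝ)

lemma gaussianScaled_eq {d : ℕ} {C : Matrix (Fin d) (Fin d) ℝ} (hC : C.PosSemidef) (τ : ℝ) :
    gaussianScaled hC τ = (stdGaussian d).map fun x => Real.sqrt τ • (Asq hC).mulVec x := rfl

lemma Asq_herm {d : ℕ} {C : Matrix (Fin d) (Fin d) ℝ} (hC : C.PosSemidef) :
    (Asq hC).IsHermitian := by
  unfold Matrix.IsHermitian Asq
  simp [Matrix.conjTranspose_mul, Matrix.mul_assoc, Matrix.star_eq_conjTranspose]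

lemma Asq_mul_self {d : ℕ} {C : Matrix (Fin d) (Fin d) ℝ} (hC : C.PosSemidef) :
    Asq hC * Asq hC = C := by
  set U : Matrix (Fin d) (Fin d) ℝ := (hC.1.eigenvectorUnitary : Matrix (Fin d) (Fin d) ℝ)
  set D := Matrix.diagonal (fun i => Real.sqrt (hC.1.eigenvalues i))
  have hU : star U * U = 1 := Unitary.coe_star_mul_self _
  have hD : D * D = Matrix.diagonal (RCLike.ofReal ∘ hC.1.eigenvalues) := by
    rw [Matrix.diagonal_mul_diagonal]
    congr 1
    funext i
    simp [Real.mul_self_sqrt (hC.eigenvalues_nonneg i)]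
  have h1 : Asq hC * Asq hC = U * (D * D) * star U := by
    simp only [Asq, Unitary.coe_star]
    calc U * D * star U * (U * D * star U) = U * D * (star U * U) * D * star U := by
          simp only [Matrix.mul_assoc]
      _ = U * (D * D) * star U := by rw [hU, Matrix.mul_one]; simp only [Matrix.mul_assoc]
  rw [h1, hD]
  conv_rhs => rw [hC.1.spectral_theorem]
  simp [U]

open Real
open scoped ENNReal NNReal

noncomputable def stdGauss1 : Measure ℝ := gaussianReal 0 1

instance : IsProbabilityMeasure stdGauss1 := by unfold stdGauss1; infer_instance

instance (d : ℕ) : IsProbabilityMeasure (stdGaussian d) := by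
  unfold _root_.stdGaussian; infer_instance

lemma stdGauss1_eq : stdGauss1 = volume.withDensity (fun x => ENNReal.ofReal ((Real.sqrt (2 * π))⁻¹ * Real.exp (- x ^ 2 / 2))) := by
  rw [stdGauss1, gaussianReal_of_var_ne_zero _ one_ne_zero]
  congr 1
  ext x
  simp [gaussianPDF, gaussianPDFReal]

-- integral against stdGauss1 as weighted Lebesgue integral
lemma integral_stdGauss1 (g : ℝ → ℝ) :
    ∫ x, g x ∂stdGauss1 = ∫ x, ((Real.sqrt (2 * π))⁻¹ * Real.exp (- x ^ 2 / 2)) * g x := by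
  rw [stdGauss1_eq]
  have hmeas : Measurable fun x : ℝ => ((Real.sqrt (2 * π))⁻¹ * Real.exp (- x ^ 2 / 2)).toNNReal := by
    fun_prop
  have := integral_withDensity_eq_integral_smul (μ := volume) hmeas g
  simp only [ENNReal.ofReal] at *
  rw [this]
  congr 1
  ext x
  rw [NNReal.smul_def, Real.coe_toNNReal _ (by positivity), smul_eq_mul]

lemma abs_pow_le (x : ℝ) (k : ℕ) : |x| ^ k ≤ x ^ (2 * k) + 1 := by
  rcases le_or_gt (|x|) 1 with h | h
  · calc |x| ^ k ≤ 1 ^ k := pow_le_pow_left₀ (abs_nonneg x) h k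
      _ = 1 := one_pow k
      _ ≤ x ^ (2*k) + 1 := le_add_of_nonneg_left ((even_two_mul k).pow_nonneg x)
  · have h1 : |x| ^ k ≤ |x| ^ (2 * k) := pow_le_pow_right₀ h.le (by omega)
    calc |x| ^ k ≤ |x| ^ (2*k) := h1
      _ = x ^ (2*k) := by rw [← abs_pow, abs_of_nonneg ((even_two_mul k).pow_nonneg x)]
      _ ≤ x ^ (2*k) + 1 := le_add_of_nonneg_right zero_le_one

lemma integrable_pow_exp_volume (k : ℕ) :
    Integrable (fun x : ℝ => x ^ k * Real.exp (-(1/2) * x ^ 2)) volume := by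
  have h : Integrable (fun x : ℝ => x ^ (k:ℝ) * Real.exp (-(1/2) * x ^ 2)) volume :=
    integrable_rpow_mul_exp_neg_mul_sq (by norm_num)
      (by exact_mod_cast neg_one_lt_zero.trans_le (Nat.cast_nonneg k))
  simp_rw [Real.rpow_natCast] at h
  exact h

lemma integrable_pow_gauss (k : ℕ) : Integrable (fun x : ℝ => x ^ k) stdGauss1 := by
  rw [stdGauss1_eq]
  rw [integrable_withDensity_iff (by fun_prop) (by filter_upwards with x using ENNReal.ofReal_lt_top)]
  have h : Integrable (fun x : ℝ => (Real.sqrt (2*π))⁻¹ * ((x ^ (2*k) + 1) * Real.exp (-(1/2) * x ^ 2))) volume := by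
    apply Integrable.const_mul
    simp_rw [add_mul, one_mul]
    exact (integrable_pow_exp_volume (2*k)).add (integrable_exp_neg_mul_sq (by norm_num))
  apply Integrable.mono' h
  · apply Measurable.aestronglyMeasurable; fun_prop
  · filter_upwards with x
    rw [ENNReal.toReal_ofReal (by positivity)]
    have hexp : Real.exp (- x ^ 2 / 2) = Real.exp (-(1/2) * x ^ 2) := by ring_nf
    rw [Real.norm_eq_abs, abs_mul, abs_pow, abs_mul,
      abs_of_nonneg (by positivity : (0:ℝ) ≤ (Real.sqrt (2*π))⁻¹),
      abs_of_pos (Real.exp_pos _), hexp]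
    calc |x| ^ k * ((Real.sqrt (2*π))⁻¹ * Real.exp (-(1/2) * x^2))
        ≤ (x ^ (2*k) + 1) * ((Real.sqrt (2*π))⁻¹ * Real.exp (-(1/2) * x^2)) := by
          gcongr; exact abs_pow_le x k
      _ = (Real.sqrt (2*π))⁻¹ * ((x ^ (2*k) + 1) * Real.exp (-(1/2) * x^2)) := by ring

lemma integral_pow_gauss_odd {k : ℕ} (hk : Odd k) : ∫ x, x ^ k ∂stdGauss1 = 0 := by
  have hmap : stdGauss1.map (fun x => (-1 : ℝ) * x) = stdGauss1 := by
    rw [stdGauss1, gaussianReal_map_const_mul (-1)]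
    norm_num
  have h1 : ∫ x, x ^ k ∂stdGauss1 = ∫ x, ((-1 : ℝ) * x) ^ k ∂stdGauss1 := by
    conv_lhs => rw [← hmap]
    rw [integral_map (by fun_prop) (by apply Measurable.aestronglyMeasurable; fun_prop)]
  have h2 : ∀ x : ℝ, ((-1 : ℝ) * x) ^ k = - (x ^ k) := by
    intro x
    rw [neg_one_mul, hk.neg_pow]
  simp_rw [h2, integral_neg] at h1
  linarith

lemma integral_Ioi_even_moment (m : ℕ) :
    ∫ x in Set.Ioi (0:ℝ), x ^ (2 * m) * Real.exp (-(1/2) * x ^ 2) =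
      (1/2 : ℝ) ^ (-((2 * m : ℕ) + 1 : ℝ)/2) * (1/2) * Real.Gamma (((2 * m : ℕ) + 1 : ℝ)/2) := by
  have h := integral_rpow_mul_exp_neg_mul_rpow (p := 2) (q := ((2*m : ℕ) : ℝ)) (b := 1/2)
    two_pos (neg_one_lt_zero.trans_le (by positivity)) (by norm_num)
  rw [← h]
  refine setIntegral_congr_fun measurableSet_Ioi (fun x hx => ?_)
  rw [Real.rpow_natCast, show ((2:ℝ)) = ((2:ℕ):ℝ) by norm_cast, Real.rpow_natCast]

lemma integral_even_moment (m : ℕ) :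
    ∫ x, x ^ (2 * m) ∂stdGauss1 =
      2 * (Real.sqrt (2 * π))⁻¹ *
        ((1/2 : ℝ) ^ (-((2 * m : ℕ) + 1 : ℝ)/2) * (1/2) * Real.Gamma (((2 * m : ℕ) + 1 : ℝ)/2)) := by
  rw [integral_stdGauss1]
  have hpt : ∀ x : ℝ, ((Real.sqrt (2 * π))⁻¹ * Real.exp (- x ^ 2 / 2)) * x ^ (2*m)
      = (fun t : ℝ => (Real.sqrt (2 * π))⁻¹ * (t ^ (2*m) * Real.exp (-(1/2) * t ^ 2))) |x| := by
    intro x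
    simp only
    rw [pow_mul, pow_mul, sq_abs]
    ring_nf
  rw [show (fun x : ℝ => ((Real.sqrt (2 * π))⁻¹ * Real.exp (- x ^ 2 / 2)) * x ^ (2*m))
      = (fun x : ℝ => (fun t : ℝ => (Real.sqrt (2 * π))⁻¹ * (t ^ (2*m) * Real.exp (-(1/2) * t ^ 2))) |x|)
    from funext hpt]
  rw [integral_comp_abs (f := fun t : ℝ => (Real.sqrt (2 * π))⁻¹ * (t ^ (2*m) * Real.exp (-(1/2) * t ^ 2)))]
  rw [integral_const_mul, integral_Ioi_even_moment m]
  ring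

lemma sqrt_two_pi_eq : Real.sqrt (2 * π) = Real.sqrt 2 * Real.sqrt π :=
  Real.sqrt_mul (by norm_num) _

lemma half_rpow_eval (j : ℕ) :
    (1/2 : ℝ) ^ (-(((2 * j : ℕ) + 3 : ℝ)/2)) = 2 ^ j * 2 * Real.sqrt 2 := by
  have h1 : (1/2 : ℝ) ^ (-(((2 * j : ℕ) + 3 : ℝ)/2)) = 2 ^ (((2 * j : ℕ) + 3 : ℝ)/2) := by
    rw [one_div, Real.inv_rpow (by norm_num), ← Real.rpow_neg (by norm_num)]
    ring_nf
  rw [h1]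
  have h2 : (((2 * j : ℕ) + 3 : ℝ)/2) = (j + 1 : ℕ) + (1/2 : ℝ) := by
    push_cast; ring
  rw [h2, Real.rpow_add (by norm_num), Real.rpow_natCast, ← Real.sqrt_eq_rpow]
  push_cast
  ring

lemma gauss_moment_two : ∫ x, x ^ 2 ∂stdGauss1 = 1 := by
  have h := integral_even_moment 1
  norm_num at h
  rw [show ((3:ℝ)) = (2 * 0 : ℕ) + 3 by norm_num] at h
  rw [half_rpow_eval 0] at h
  have hg : Real.Gamma (((2 * 0 : ℕ) + 3 : ℝ) / 2) = Real.sqrt π / 2 := by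
    norm_num
    rw [show ((3:ℝ)/2) = 1/2 + 1 by norm_num, Real.Gamma_add_one (by norm_num),
      Real.Gamma_one_half_eq]
    ring
  rw [hg] at h
  rw [h]
  have h2 : Real.sqrt 2 > 0 := Real.sqrt_pos.2 (by norm_num)
  have hp : Real.sqrt π > 0 := Real.sqrt_pos.2 Real.pi_pos
  have h2' : Real.sqrt 2 * Real.sqrt 2 = 2 := Real.mul_self_sqrt (by norm_num)
  field_simp

lemma gauss_moment_four : ∫ x, x ^ 4 ∂stdGauss1 = 3 := by
  have h := integral_even_moment 2
  norm_num at h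
  rw [show ((5:ℝ)) = (2 * 1 : ℕ) + 3 by norm_num] at h
  rw [half_rpow_eval 1] at h
  have hg : Real.Gamma (((2 * 1 : ℕ) + 3 : ℝ) / 2) = 3 * Real.sqrt π / 4 := by
    norm_num
    rw [show ((5:ℝ)/2) = 3/2 + 1 by norm_num, Real.Gamma_add_one (by norm_num),
      show ((3:ℝ)/2) = 1/2 + 1 by norm_num, Real.Gamma_add_one (by norm_num),
      Real.Gamma_one_half_eq]
    ring
  rw [hg] at h
  rw [h]
  have h2 : Real.sqrt 2 > 0 := Real.sqrt_pos.2 (by norm_num)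
  have hp : Real.sqrt π > 0 := Real.sqrt_pos.2 Real.pi_pos
  have h2' : Real.sqrt 2 * Real.sqrt 2 = 2 := Real.mul_self_sqrt (by norm_num)
  field_simp
  nlinarith [h2', h2, hp]

noncomputable def G (k : ℕ) : ℝ := ∫ t, t ^ k ∂stdGauss1

lemma G0 : G 0 = 1 := by simp [G]
lemma G1 : G 1 = 0 := integral_pow_gauss_odd odd_one
lemma G2 : G 2 = 1 := gauss_moment_two
lemma G3 : G 3 = 0 := integral_pow_gauss_odd (by decide)
lemma G4 : G 4 = 3 := gauss_moment_four

lemma integrable_pi_monomial {d : ℕ} (m : Fin d → ℕ) :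
    Integrable (fun x : Fin d → ℝ => ∏ i, x i ^ m i) (stdGaussian d) := by
  letI : MeasureSpace ℝ := ⟨stdGauss1⟩
  haveI : SigmaFinite (volume : Measure ℝ) := by
    show SigmaFinite stdGauss1; infer_instance
  exact Integrable.fintype_prod (f := fun i (t : ℝ) => t ^ m i) (fun i => integrable_pow_gauss (m i))

lemma integral_pi_monomial {d : ℕ} (m : Fin d → ℕ) :
    ∫ x, (∏ i, x i ^ m i) ∂(stdGaussian d) = ∏ i, G (m i) := by
  letI : MeasureSpace ℝ := ⟨stdGauss1⟩
  haveI : SigmaFinite (volume : Measure ℝ) := by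
    show SigmaFinite stdGauss1; infer_instance
  exact integral_fintype_prod_eq_prod (fun i (t : ℝ) => t ^ m i)

/-- exponent delta -/
def dd {d : ℕ} (a i : Fin d) : ℕ := if i = a then 1 else 0

/-- Kronecker delta (real). -/
noncomputable def kd {d : ℕ} (i j : Fin d) : ℝ := if i = j then 1 else 0

lemma prod_pow_dd {d : ℕ} (a : Fin d) (x : Fin d → ℝ) :
    ∏ i, x i ^ dd a i = x a := by
  have h : ∀ i ∈ Finset.univ, x i ^ dd a i = if i = a then x i else 1 := by
    intro i _
    unfold dd
    split <;> simp
  rw [Finset.prod_congr rfl h, Finset.prod_ite_eq' Finset.univ a (fun i => x i)]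
  simp

lemma prod_pow_dd_add {d : ℕ} (a : Fin d) (n : Fin d → ℕ) (x : Fin d → ℝ) :
    ∏ i, x i ^ (dd a i + n i) = x a * ∏ i, x i ^ n i := by
  simp_rw [pow_add]
  rw [Finset.prod_mul_distrib, prod_pow_dd]

lemma mono2 {d : ℕ} (a b : Fin d) (x : Fin d → ℝ) :
    x a * x b = ∏ i, x i ^ (dd a i + dd b i) := by
  rw [prod_pow_dd_add, prod_pow_dd]

lemma mono4 {d : ℕ} (a b c e : Fin d) (x : Fin d → ℝ) :
    x a * x b * (x c * x e) = ∏ i, x i ^ (dd a i + (dd b i + (dd c i + dd e i))) := by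
  rw [prod_pow_dd_add, prod_pow_dd_add, prod_pow_dd_add, prod_pow_dd]
  ring

lemma integral_mono2 {d : ℕ} (a b : Fin d) :
    ∫ x, x a * x b ∂(stdGaussian d) = kd a b := by
  simp_rw [mono2 a b]
  rw [integral_pi_monomial]
  unfold kd
  by_cases hab : a = b
  · subst hab
    rw [if_pos rfl]
    apply Finset.prod_eq_one
    intro i _
    unfold dd
    by_cases hia : i = a
    · simp [hia, G2]
    · simp [hia, G0]
  · rw [if_neg hab]
    apply Finset.prod_eq_zero (Finset.mem_univ a)
    have : dd a a + dd b a = 1 := by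
      unfold dd
      simp [hab]
    rw [this, G1]

lemma integrable_mono2 {d : ℕ} (a b : Fin d) :
    Integrable (fun x : Fin d → ℝ => x a * x b) (stdGaussian d) := by
  simp_rw [mono2 a b]
  exact integrable_pi_monomial _

lemma integrable_mono4 {d : ℕ} (a b c e : Fin d) :
    Integrable (fun x : Fin d → ℝ => x a * x b * (x c * x e)) (stdGaussian d) := by
  simp_rw [mono4 a b c e]
  exact integrable_pi_monomial _

lemma prod_G_two_fibers {d : ℕ} {p q : Fin d} (m : Fin d → ℕ) (hpq : p ≠ q)
    (hp : m p = 2) (hq : m q = 2) (h0 : ∀ i, i ≠ p → i ≠ q → m i = 0) :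
    ∏ i, G (m i) = 1 := by
  apply Finset.prod_eq_one
  intro i _
  by_cases hip : i = p
  · rw [hip, hp, G2]
  · by_cases hiq : i = q
    · rw [hiq, hq, G2]
    · rw [h0 i hip hiq, G0]

lemma integral_mono4 {d : ℕ} (a b c e : Fin d) :
    ∫ x, x a * x b * (x c * x e) ∂(stdGaussian d)
      = kd a b * kd c e + kd a c * kd b e + kd a e * kd b c := by
  simp_rw [mono4 a b c e]
  rw [integral_pi_monomial]
  set m : Fin d → ℕ := fun i => dd a i + (dd b i + (dd c i + dd e i)) with hm
  by_cases hab : a = b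
  · subst hab
    by_cases hce : c = e
    · subst hce
      by_cases hac : a = c
      · subst hac
        have h : ∀ i ∈ Finset.univ, G (m i) = if i = a then (3:ℝ) else 1 := by
          intro i _
          by_cases hia : i = a <;> simp [hm, dd, hia] <;> norm_num [G4, G0]
        rw [Finset.prod_congr rfl h, Finset.prod_ite_eq' Finset.univ a (fun _ => (3:ℝ))]
        simp [kd]
        norm_num
      · rw [prod_G_two_fibers m hac ?_ ?_ ?_]
        · simp [kd, hac]
        · simp [hm, dd, hac]
        · simp [hm, dd, Ne.symm hac]
        · intro i hip hiq; simp [hm, dd, hip, hiq]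
    · -- a = b, c ≠ e : odd fiber at c ; RHS is 0
      rw [Finset.prod_eq_zero (Finset.mem_univ c) ?_]
      · by_cases hac : a = c
        · have hae : ¬ a = e := fun h => hce (hac ▸ h)
          simp [kd, hce, hae]
        · by_cases hae : a = e <;> simp [kd, hce, hac, hae, Ne.symm hce]
      · by_cases hca : c = a
        · have hae : ¬ a = e := fun h => hce (hca.trans h)
          simp [hm, dd, hca, hce, hae]
          norm_num [G3]
        · simp [hm, dd, hca, hce]
          norm_num [G1]
  · by_cases hce : c = e
    · subst hce
      -- a ≠ b, pair (c,c) : odd fiber at a ; RHS is 0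
      rw [Finset.prod_eq_zero (Finset.mem_univ a) ?_]
      · by_cases hac : a = c
        · have hbc : ¬ b = c := fun h => hab (by rw [hac, h])
          simp [kd, hab, hac, hbc, Ne.symm hbc]
        · simp [kd, hab, hac]
      · by_cases hac : a = c
        · have hcb : ¬ c = b := fun h => hab (hac.trans h)
          simp [hm, dd, hac, hcb, hab]
          norm_num [G3]
        · simp [hm, dd, hab, hac]
          norm_num [G1]
    · by_cases hac : a = c
      · subst hac
        by_cases hbe : b = e
        · subst hbe
          -- pairs (a,c) and (b,e), a ≠ b
          rw [prod_G_two_fibers m hab ?_ ?_ ?_]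
          · simp [kd, hab]
          · simp [hm, dd, hab]
          · simp [hm, dd, Ne.symm hab]
          · intro i hip hiq; simp [hm, dd, hip, hiq]
        · -- odd fiber at b
          rw [Finset.prod_eq_zero (Finset.mem_univ b) ?_]
          · simp [kd, hab, hbe, Ne.symm hab]
          · simp [hm, dd, Ne.symm hab, hbe, fun h : b = a => hab h.symm] <;> norm_num [G1, G3]
      · by_cases hae : a = e
        · subst hae
          by_cases hbc : b = c
          · subst hbc
            rw [prod_G_two_fibers m hab ?_ ?_ ?_]
            · simp [kd, hab, hac, Ne.symm hac]
            · simp [hm, dd, Ne.symm hab, hac]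
            · simp [hm, dd, hab, Ne.symm hab, Ne.symm hac]
            · intro i hip hiq; simp [hm, dd, hip, hiq]
          · rw [Finset.prod_eq_zero (Finset.mem_univ b) ?_]
            · simp [kd, hab, hbc, Ne.symm hab]
            · simp [hm, dd, Ne.symm hab, hbc, fun h : b = a => hab h.symm] <;> norm_num [G1, G3]
        · -- a alone : odd fiber at a
          rw [Finset.prod_eq_zero (Finset.mem_univ a) ?_]
          · simp [kd, hab, hac, hae]
          · simp [hm, dd, hab, hac, hae] <;> norm_num [G1, G3]

variable {d : ℕ} {A : Matrix (Fin d) (Fin d) ℝ}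

lemma expand2 (a b : Fin d) (x : Fin d → ℝ) :
    (A.mulVec x) a * (A.mulVec x) b
      = ∑ k, ∑ l, (A a k * A b l) * (x k * x l) := by
  simp only [Matrix.mulVec, dotProduct]
  rw [Finset.sum_mul_sum]
  refine Finset.sum_congr rfl fun k _ => Finset.sum_congr rfl fun l _ => by ring

lemma integrable_mulVec2 (a b : Fin d) :
    Integrable (fun x : Fin d → ℝ => (A.mulVec x) a * (A.mulVec x) b) (stdGaussian d) := by
  simp_rw [expand2 a b]
  exact integrable_finset_sum _ fun k _ =>
    integrable_finset_sum _ fun l _ => (integrable_mono2 k l).const_mul _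

lemma integral_mulVec2 (a b : Fin d) :
    ∫ x, (A.mulVec x) a * (A.mulVec x) b ∂(stdGaussian d) = ∑ k, A a k * A b k := by
  simp_rw [expand2 a b]
  rw [integral_finset_sum _ fun k _ =>
    integrable_finset_sum _ fun l _ => (integrable_mono2 k l).const_mul _]
  have h : ∀ k, ∫ x, (∑ l, (A a k * A b l) * (x k * x l)) ∂(stdGaussian d)
      = ∑ l, (A a k * A b l) * kd k l := by
    intro k
    rw [integral_finset_sum _ fun l _ => (integrable_mono2 k l).const_mul _]
    exact Finset.sum_congr rfl fun l _ => by rw [integral_const_mul, integral_mono2]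
  simp_rw [h]
  refine Finset.sum_congr rfl fun k _ => ?_
  simp [kd, mul_ite, Finset.sum_ite_eq]

lemma expand4 (a b c e : Fin d) (x : Fin d → ℝ) :
    (A.mulVec x) a * (A.mulVec x) b * ((A.mulVec x) c * (A.mulVec x) e)
      = ∑ k, ∑ l, ∑ m, ∑ n, (A a k * A b l * (A c m * A e n)) * (x k * x l * (x m * x n)) := by
  calc (A.mulVec x) a * (A.mulVec x) b * ((A.mulVec x) c * (A.mulVec x) e)
      = (∑ k, ∑ l, (A a k * A b l) * (x k * x l)) *
          (∑ m, ∑ n, (A c m * A e n) * (x m * x n)) := by rw [expand2, expand2]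
    _ = ∑ k, ∑ m, (∑ l, (A a k * A b l) * (x k * x l)) *
          (∑ n, (A c m * A e n) * (x m * x n)) := Finset.sum_mul_sum _ _ _ _
    _ = ∑ k, ∑ m, ∑ l, ∑ n, ((A a k * A b l) * (x k * x l)) *
          ((A c m * A e n) * (x m * x n)) := by
        refine Finset.sum_congr rfl fun k _ => Finset.sum_congr rfl fun m _ => ?_
        exact Finset.sum_mul_sum _ _ _ _
    _ = ∑ k, ∑ l, ∑ m, ∑ n, (A a k * A b l * (A c m * A e n)) * (x k * x l * (x m * x n)) := by
        refine Finset.sum_congr rfl fun k _ => ?_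
        rw [Finset.sum_comm]
        refine Finset.sum_congr rfl fun l _ => Finset.sum_congr rfl fun m _ =>
          Finset.sum_congr rfl fun n _ => by ring

lemma integrable_mulVec4 (a b c e : Fin d) :
    Integrable (fun x : Fin d → ℝ =>
      (A.mulVec x) a * (A.mulVec x) b * ((A.mulVec x) c * (A.mulVec x) e)) (stdGaussian d) := by
  simp_rw [expand4 a b c e]
  exact integrable_finset_sum _ fun k _ => integrable_finset_sum _ fun l _ =>
    integrable_finset_sum _ fun m _ => integrable_finset_sum _ fun n _ =>
      (integrable_mono4 k l m n).const_mul _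

lemma integral_mulVec4 (a b c e : Fin d) :
    ∫ x, (A.mulVec x) a * (A.mulVec x) b * ((A.mulVec x) c * (A.mulVec x) e) ∂(stdGaussian d)
      = (∑ k, A a k * A b k) * (∑ m, A c m * A e m)
        + (∑ k, A a k * A c k) * (∑ m, A b m * A e m)
        + (∑ k, A a k * A e k) * (∑ m, A b m * A c m) := by
  simp_rw [expand4 a b c e]
  rw [integral_finset_sum _ fun k _ => integrable_finset_sum _ fun l _ =>
    integrable_finset_sum _ fun m _ => integrable_finset_sum _ fun n _ =>
      (integrable_mono4 k l m n).const_mul _]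
  have h1 : ∀ k, ∫ x, (∑ l, ∑ m, ∑ n, (A a k * A b l * (A c m * A e n)) *
      (x k * x l * (x m * x n))) ∂(stdGaussian d)
      = ∑ l, ∑ m, ∑ n, (A a k * A b l * (A c m * A e n)) *
          (kd k l * kd m n + kd k m * kd l n + kd k n * kd l m) := by
    intro k
    rw [integral_finset_sum _ fun l _ => integrable_finset_sum _ fun m _ =>
      integrable_finset_sum _ fun n _ => (integrable_mono4 k l m n).const_mul _]
    refine Finset.sum_congr rfl fun l _ => ?_
    rw [integral_finset_sum _ fun m _ => integrable_finset_sum _ fun n _ =>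
      (integrable_mono4 k l m n).const_mul _]
    refine Finset.sum_congr rfl fun m _ => ?_
    rw [integral_finset_sum _ fun n _ => (integrable_mono4 k l m n).const_mul _]
    refine Finset.sum_congr rfl fun n _ => ?_
    rw [integral_const_mul, integral_mono4]
  simp_rw [h1]
  simp only [mul_add, Finset.sum_add_distrib]
  congr 1
  · congr 1
    · rw [Finset.sum_mul_sum]
      refine Finset.sum_congr rfl fun k _ => ?_
      simp [kd, mul_ite, ite_mul, Finset.sum_ite_eq, Finset.mul_sum, mul_comm, mul_assoc,
        mul_left_comm]
    · rw [Finset.sum_mul_sum]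
      refine Finset.sum_congr rfl fun k _ => ?_
      simp [kd, mul_ite, ite_mul, Finset.sum_ite_eq, Finset.mul_sum, mul_comm, mul_assoc,
        mul_left_comm]
  · rw [Finset.sum_mul_sum]
    refine Finset.sum_congr rfl fun k _ => ?_
    simp [kd, mul_ite, ite_mul, Finset.sum_ite_eq, Finset.mul_sum, mul_comm, mul_assoc,
      mul_left_comm]

variable {d : ℕ} {C : Matrix (Fin d) (Fin d) ℝ} (hC : C.PosSemidef)

lemma mulVec_continuous : Continuous (fun x : Fin d → ℝ => (Asq hC).mulVec x) := by
  have : (fun x : Fin d → ℝ => (Asq hC).mulVec x) = (Asq hC).mulVecLin := by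
    ext x i; rfl
  rw [this]
  exact LinearMap.continuous_of_finiteDimensional _

lemma phi_continuous (τ : ℝ) :
    Continuous (fun x : Fin d → ℝ => Real.sqrt τ • (Asq hC).mulVec x) :=
  (mulVec_continuous hC).const_smul (Real.sqrt τ)

lemma gaussianScaled_measurable :
    Measurable (fun τ : ℝ => gaussianScaled hC τ) := by
  apply Measure.measurable_of_measurable_coe
  intro s hs
  simp_rw [gaussianScaled_eq,
    Measure.map_apply ((phi_continuous hC _).measurable) hs]
  have hF : Measurable (fun p : ℝ × (Fin d → ℝ) => Real.sqrt p.1 • (Asq hC).mulVec p.2) := by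
    apply Measurable.smul (f := fun p : ℝ × (Fin d → ℝ) => Real.sqrt p.1)
      (g := fun p : ℝ × (Fin d → ℝ) => (Asq hC).mulVec p.2)
    · exact (Real.continuous_sqrt.comp continuous_fst).measurable
    · exact ((mulVec_continuous hC).comp continuous_snd).measurable
  have ht : MeasurableSet {p : ℝ × (Fin d → ℝ) | Real.sqrt p.1 • (Asq hC).mulVec p.2 ∈ s} :=
    hF hs
  exact measurable_measure_prodMk_left (ν := stdGaussian d) ht

theorem key_bind_integral (ρ : Measure ℝ) (hρae : ∀ᵐ τ ∂ρ, 0 < τ)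
    (g : (Fin d → ℝ) → ℝ) (hg : Continuous g) (n : ℕ)
    (hom : ∀ τ : ℝ, 0 < τ → ∀ y, g (Real.sqrt τ • y) = τ ^ n * g y)
    (hGint : Integrable (fun x => g ((Asq hC).mulVec x)) (stdGaussian d)) :
    ∫ x, g x ∂(ρ.bind (gaussianScaled hC))
      = (∫ τ, τ ^ n ∂ρ) * ∫ x, g ((Asq hC).mulVec x) ∂(stdGaussian d) := by
  set ν := ρ.bind (gaussianScaled hC) with hν
  set Γ := stdGaussian d
  set A := Asq hC
  set P := ∫⁻ x, ENNReal.ofReal (max (g (A.mulVec x)) 0) ∂Γ with hP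
  set N := ∫⁻ x, ENNReal.ofReal (max (- g (A.mulVec x)) 0) ∂Γ with hN
  set T := ∫⁻ τ, ENNReal.ofReal (τ ^ n) ∂ρ with hT
  have hgm : Measurable g := hg.measurable
  have hGAm : Measurable fun x : Fin d → ℝ => g (A.mulVec x) :=
    hgm.comp (mulVec_continuous hC).measurable
  have hgpm : Measurable fun x => ENNReal.ofReal (max (g x) 0) :=
    (hgm.max measurable_const).ennreal_ofReal
  have hgnm : Measurable fun x => ENNReal.ofReal (max (- g x) 0) :=
    ((hgm.neg).max measurable_const).ennreal_ofReal
  -- inner lintegral identities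
  have hinner : ∀ (h : (Fin d → ℝ) → ℝ) (hh : Measurable h), ∀ τ : ℝ,
      ∫⁻ x, ENNReal.ofReal (h x) ∂(gaussianScaled hC τ)
        = ∫⁻ x, ENNReal.ofReal (h (Real.sqrt τ • A.mulVec x)) ∂Γ := by
    intro h hh τ
    rw [gaussianScaled_eq, lintegral_map hh.ennreal_ofReal (phi_continuous hC τ).measurable]
  have hinner_pos : ∀ τ : ℝ, 0 < τ →
      ∫⁻ x, ENNReal.ofReal (max (g x) 0) ∂(gaussianScaled hC τ)
        = ENNReal.ofReal (τ ^ n) * P := by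
    intro τ hτ
    rw [hinner _ (hgm.max measurable_const) τ, hP]
    rw [← lintegral_const_mul _ (hGAm.max measurable_const).ennreal_ofReal]
    congr 1
    ext x
    rw [hom τ hτ, ← ENNReal.ofReal_mul (by positivity)]
    congr 1
    rw [mul_max_of_nonneg _ _ (by positivity : (0:ℝ) ≤ τ ^ n), mul_zero]
  have hinner_neg : ∀ τ : ℝ, 0 < τ →
      ∫⁻ x, ENNReal.ofReal (max (- g x) 0) ∂(gaussianScaled hC τ)
        = ENNReal.ofReal (τ ^ n) * N := by
    intro τ hτ
    rw [hinner (fun x => max (- g x) 0) (hgm.neg.max measurable_const) τ, hN]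
    rw [← lintegral_const_mul _ (f := fun x => ENNReal.ofReal (max (- g (A.mulVec x)) 0)) (hGAm.neg.max measurable_const).ennreal_ofReal]
    congr 1
    ext x
    rw [hom τ hτ, ← ENNReal.ofReal_mul (by positivity)]
    congr 1
    rw [mul_max_of_nonneg _ _ (by positivity : (0:ℝ) ≤ τ ^ n), mul_zero]
    congr 1
    ring
  -- lintegrals over ν
  have hbind : ∀ (h : (Fin d → ℝ) → ℝ≥0∞) (hh : Measurable h),
      ∫⁻ x, h x ∂ν = ∫⁻ τ, (∫⁻ x, h x ∂(gaussianScaled hC τ)) ∂ρ := fun h hh =>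
    Measure.lintegral_bind (gaussianScaled_measurable hC).aemeasurable hh.aemeasurable
  have hνpos : ∫⁻ x, ENNReal.ofReal (max (g x) 0) ∂ν = T * P := by
    rw [hbind _ hgpm]
    rw [lintegral_congr_ae (g := fun τ => ENNReal.ofReal (τ ^ n) * P)
      (by filter_upwards [hρae] with τ hτ using hinner_pos τ hτ)]
    rw [lintegral_mul_const _ (by fun_prop), hT]
  have hνneg : ∫⁻ x, ENNReal.ofReal (max (- g x) 0) ∂ν = T * N := by
    rw [hbind _ hgnm]
    rw [lintegral_congr_ae (g := fun τ => ENNReal.ofReal (τ ^ n) * N)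
      (by filter_upwards [hρae] with τ hτ using hinner_neg τ hτ)]
    rw [lintegral_mul_const _ (by fun_prop), hT]
  have habs : ∀ (h : (Fin d → ℝ) → ℝ) (μ : Measure (Fin d → ℝ)),
      ∫⁻ x, ‖h x‖ₑ ∂μ = ∫⁻ x, (ENNReal.ofReal (max (h x) 0)
        + ENNReal.ofReal (max (- h x) 0)) ∂μ := by
    intro h μ
    congr 1
    ext x
    rw [← ENNReal.ofReal_add (le_max_right _ _) (le_max_right _ _),
      ← ofReal_norm_eq_enorm]
    congr 1
    rw [Real.norm_eq_abs]
    rcases le_or_gt 0 (h x) with hh | hh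
    · rw [abs_of_nonneg hh, max_eq_left hh, max_eq_right (by linarith), add_zero]
    · rw [abs_of_neg hh, max_eq_right hh.le, max_eq_left (by linarith), zero_add]
  have hνabs : ∫⁻ x, ‖g x‖ₑ ∂ν = T * P + T * N := by
    rw [habs g ν, lintegral_add_left hgpm, hνpos, hνneg]
  -- finiteness of P and N
  have hPN : P + N ≠ ⊤ := by
    have := hGint.hasFiniteIntegral
    rw [HasFiniteIntegral] at this
    rw [← lintegral_add_left (hGAm.max measurable_const).ennreal_ofReal,
      ← habs (fun x => g (A.mulVec x)) Γ]
    exact this.ne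
  have hTval : ∫ τ, τ ^ n ∂ρ = T.toReal := by
    rw [integral_eq_lintegral_of_nonneg_ae
      (by filter_upwards [hρae] with τ hτ using by positivity)
      (by fun_prop)]
  have hGval : ∫ x, g (A.mulVec x) ∂Γ = P.toReal - N.toReal := by
    have hsplit : (fun x => g (A.mulVec x))
        = fun x => max (g (A.mulVec x)) 0 - max (- g (A.mulVec x)) 0 := by
      ext x
      rcases le_or_gt 0 (g (A.mulVec x)) with h | h
      · rw [max_eq_left h, max_eq_right (by linarith)]; ring
      · rw [max_eq_right h.le, max_eq_left (by linarith)]; ring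
    rw [hsplit, integral_sub hGint.pos_part hGint.neg_part,
      integral_eq_lintegral_of_nonneg_ae (by filter_upwards with x using le_max_right _ _)
        ((hGAm.max measurable_const).aestronglyMeasurable),
      integral_eq_lintegral_of_nonneg_ae (f := fun x => max (- g (A.mulVec x)) 0)
        (by filter_upwards with x using le_max_right _ _)
        ((hGAm.neg.max measurable_const).aestronglyMeasurable), hP, hN]
  rw [hTval, hGval]
  by_cases hint : Integrable g ν
  · have hsplit : g = fun x => max (g x) 0 - max (- g x) 0 := by
      ext x
      rcases le_or_gt 0 (g x) with h | h
      · rw [max_eq_left h, max_eq_right (by linarith)]; ring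
      · rw [max_eq_right h.le, max_eq_left (by linarith)]; ring
    conv_lhs => rw [hsplit]
    rw [integral_sub hint.pos_part hint.neg_part,
      integral_eq_lintegral_of_nonneg_ae (by filter_upwards with x using le_max_right _ _)
        ((hgm.max measurable_const).aestronglyMeasurable),
      integral_eq_lintegral_of_nonneg_ae (f := fun x => max (- g x) 0)
        (by filter_upwards with x using le_max_right _ _)
        ((hgm.neg.max measurable_const).aestronglyMeasurable),
      hνpos, hνneg, ENNReal.toReal_mul, ENNReal.toReal_mul]
    ring
  · rw [integral_undef hint]
    have hfi : ¬ HasFiniteIntegral g ν := fun h => hint ⟨hg.aestronglyMeasurable, h⟩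
    rw [HasFiniteIntegral, hνabs] at hfi
    have hTtop : T = ⊤ := by
      by_contra hTne
      apply hfi
      have hPfin : P ≠ ⊤ := fun h => hPN (by simp [h])
      have hNfin : N ≠ ⊤ := fun h => hPN (by simp [h])
      exact lt_top_iff_ne_top.2 (by
        simp [ENNReal.mul_ne_top hTne hPfin, ENNReal.mul_ne_top hTne hNfin,
          ENNReal.add_ne_top])
    rw [hTtop]
    simp

lemma Csymm {d : ℕ} {C : Matrix (Fin d) (Fin d) ℝ} (hC : C.PosSemidef) (i j : Fin d) :
    C i j = C j i := by
  have h := hC.1.apply j i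
  simpa using h

lemma sumAA {d : ℕ} {C : Matrix (Fin d) (Fin d) ℝ} (hC : C.PosSemidef) (a b : Fin d) :
    ∑ k, Asq hC a k * Asq hC b k = C a b := by
  conv_rhs => rw [← Asq_mul_self hC]
  rw [Matrix.mul_apply]
  refine Finset.sum_congr rfl fun k _ => ?_
  congr 1
  have h := (Asq_herm hC).apply b k
  simpa using h.symm

end Aux

/-- Let `ρ` be a measure on `(0, ∞)` with `∫ τ² ρ(dτ) < ∞` and let
`ν(B) = ∫ N_{τC}(B) ρ(dτ)` be the corresponding Gaussian mixture on `ℝ^d`. Then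
`∫ x xᵀ ν(dx) = (∫ τ ρ(dτ)) C` and
`∫ vec(x xᵀ) vec(x xᵀ)ᵀ ν(dx) = (∫ τ² ρ(dτ)) (C ⊗ C + K_d (C ⊗ C) + vec(C) vec(C)ᵀ)`. -/
theorem gaussian_mixture_second_and_fourth_moments (d : ℕ) (hd : 1 ≤ d)
    (C : Matrix (Fin d) (Fin d) ℝ) (hC : C.PosSemidef)
    (ρ : Measure ℝ) (hρconc : ρ {τ : ℝ | τ ∉ Set.Ioi (0 : ℝ)} = 0)
    (hρsq : Integrable (fun τ : ℝ => τ ^ 2) ρ)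
    (ν : Measure (Fin d → ℝ)) (hν : ν = ρ.bind fun τ => gaussianScaled hC τ) :
    (∀ i j : Fin d,
      ∫ x, x i * x j ∂ν = (∫ τ, τ ∂ρ) * C i j) ∧
    (∀ p q : Fin d × Fin d,
      ∫ x, ((Matrix.vecMulVec x x) ⊗ₖ (Matrix.vecMulVec x x)) p q ∂ν =
        (∫ τ, τ ^ 2 ∂ρ) *
          (C ⊗ₖ C + commutationMatrix d * (C ⊗ₖ C) +
            Matrix.vecMulVec (vecOp C) (vecOp C)) p q) := by
  subst hν
  have hρae : ∀ᵐ τ ∂ρ, 0 < τ := by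
    rw [ae_iff]
    exact hρconc
  constructor
  · intro i j
    have hkey := key_bind_integral hC ρ hρae (fun x => x i * x j)
      (by continuity) 1
      (fun τ hτ y => by
        have h2 : (Real.sqrt τ) ^ 2 = τ := Real.sq_sqrt hτ.le
        simp only [Pi.smul_apply, smul_eq_mul, pow_one]
        conv_rhs => rw [← h2]
        ring)
      (integrable_mulVec2 i j)
    rw [show (ρ.bind fun τ => gaussianScaled hC τ) = ρ.bind (gaussianScaled hC) from rfl,
      hkey, integral_mulVec2, sumAA hC]
    simp
  · intro p q
    simp_rw [Matrix.kroneckerMap_apply, Matrix.vecMulVec_apply]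
    have hkey := key_bind_integral hC ρ hρae (fun x => x p.1 * x q.1 * (x p.2 * x q.2))
      (by continuity) 2
      (fun τ hτ y => by
        have h2 : (Real.sqrt τ) ^ 2 = τ := Real.sq_sqrt hτ.le
        simp only [Pi.smul_apply, smul_eq_mul]
        conv_rhs => rw [← h2]
        ring)
      (integrable_mulVec4 p.1 q.1 p.2 q.2)
    rw [show (ρ.bind fun τ => gaussianScaled hC τ) = ρ.bind (gaussianScaled hC) from rfl,
      hkey, integral_mulVec4, sumAA hC, sumAA hC, sumAA hC, sumAA hC, sumAA hC, sumAA hC]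
    congr 1
    -- matrix entry computation
    have hK : (commutationMatrix d * (C ⊗ₖ C)) p q = C p.2 q.1 * C p.1 q.2 := by
      rw [Matrix.mul_apply]
      rw [Fintype.sum_prod_type]
      simp only [commutationMatrix, Matrix.of_apply, ite_and, ite_mul, zero_mul, one_mul]
      rw [Finset.sum_comm]
      simp [Finset.sum_ite_eq, Matrix.kroneckerMap_apply]
    rw [Matrix.add_apply, Matrix.add_apply, hK, Matrix.kroneckerMap_apply,
      Matrix.vecMulVec_apply]
    simp only [vecOp]
    rw [Csymm hC p.2 q.1, Csymm hC p.2 p.1, Csymm hC q.2 q.1]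
    ring
end
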